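/- arXiv:2512.00886 — 9 statements merged into one kernel-verified Lean document; each statement's English description precedes it below -/
import Mathlib

section
/- Let A be a commutative ring, I a nilpotent ideal of A, B a formally étale commutative A-algebra and B′ a commutative A-algebra that is flat as an A-module. Then every A/I-algebra isomorphism B/IB ≅ B′/IB′ lifts to a unique A-algebra homomorphism B → B′ inducing it modulo I, and this A-algebra homomorphism is an isomorphism. -/
universe u

/-- Nakayama for nilpotent ideals: if `K ≤ I • K` and `I` is nilpotent, `K = ⊥`. -/
lemma aux_eq_bot_of_le_smul_of_isNilpotent {R M : Type*} [CommRing R] [AddCommGroup M]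
    [Module R M] {I : Ideal R} (hI : IsNilpotent I) {K : Submodule R M}
    (h : K ≤ I • K) : K = ⊥ := by
  obtain ⟨n, hn⟩ := hI
  have key : ∀ m : ℕ, K ≤ I ^ m • K := by
    intro m
    induction m with
    | zero => simp
    | succ m ih =>
      calc K ≤ I • K := h
        _ ≤ I • (I ^ m • K) := Submodule.smul_mono le_rfl ih
        _ = I ^ (m + 1) • K := by
            rw [pow_succ', ← Ideal.smul_eq_mul, Submodule.smul_assoc]
  have := key n
  rw [hn, Ideal.zero_eq_bot, Submodule.bot_smul, le_bot_iff] at this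
  exact this

/-- If `⊤ ≤ S ⊔ I • ⊤` with `I` nilpotent, then `S = ⊤`. -/
lemma aux_eq_top_of_le_sup_smul_of_isNilpotent {R M : Type*} [CommRing R] [AddCommGroup M]
    [Module R M] {I : Ideal R} (hI : IsNilpotent I) {S : Submodule R M}
    (h : (⊤ : Submodule R M) ≤ S ⊔ I • ⊤) : S = ⊤ := by
  obtain ⟨n, hn⟩ := hI
  have key : ∀ m : ℕ, (⊤ : Submodule R M) ≤ S ⊔ I ^ m • ⊤ := by
    intro m
    induction m with
    | zero => simp
    | succ m ih =>
      refine ih.trans (sup_le le_sup_left ?_)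
      calc I ^ m • (⊤ : Submodule R M) ≤ I ^ m • (S ⊔ I • ⊤) :=
            Submodule.smul_mono le_rfl h
        _ = I ^ m • S ⊔ I ^ m • (I • ⊤) := Submodule.smul_sup _ _ _
        _ ≤ S ⊔ I ^ (m + 1) • ⊤ := by
            refine sup_le_sup (Submodule.smul_le_right) (le_of_eq ?_)
            rw [pow_succ, ← Ideal.smul_eq_mul, Submodule.smul_assoc]
  have := key n
  rw [hn, Ideal.zero_eq_bot, Submodule.bot_smul, sup_bot_eq, top_le_iff] at this
  exact this

/-- Let `A` be a commutative ring, `I` a nilpotent ideal of `A`,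
`B` a formally étale commutative `A`-algebra and `B'` a commutative `A`-algebra that is
flat as an `A`-module. Then every `A/I`-algebra isomorphism `B/IB ≅ B'/IB'` lifts to a
unique `A`-algebra homomorphism `B → B'` inducing it modulo `I`, and this `A`-algebra
homomorphism is an isomorphism. -/
theorem formallyEtale_lift_iso_of_nilpotent
    (A B B' : Type u) [CommRing A] [CommRing B] [CommRing B']
    [Algebra A B] [Algebra A B'] (I : Ideal A) (hI : IsNilpotent I)
    [Algebra.FormallyEtale A B] [Module.Flat A B']
    (e : (B ⧸ Ideal.map (algebraMap A B) I) ≃ₐ[A] (B' ⧸ Ideal.map (algebraMap A B') I)) :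
    (∃! f : B →ₐ[A] B',
        (Ideal.Quotient.mkₐ A (Ideal.map (algebraMap A B') I)).comp f =
          (e.toAlgHom).comp (Ideal.Quotient.mkₐ A (Ideal.map (algebraMap A B) I))) ∧
    ∀ f : B →ₐ[A] B',
      (Ideal.Quotient.mkₐ A (Ideal.map (algebraMap A B') I)).comp f =
          (e.toAlgHom).comp (Ideal.Quotient.mkₐ A (Ideal.map (algebraMap A B) I)) →
        Function.Bijective f := by
  obtain ⟨n, hn⟩ := hI
  have hIB'nil : IsNilpotent (Ideal.map (algebraMap A B') I) := by
    refine ⟨n, ?_⟩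
    rw [← Ideal.map_pow, hn, Ideal.zero_eq_bot, Ideal.map_bot, Ideal.zero_eq_bot]
  constructor
  · -- existence and uniqueness of the lift
    refine ⟨Algebra.FormallySmooth.lift (Ideal.map (algebraMap A B') I) hIB'nil
      (e.toAlgHom.comp (Ideal.Quotient.mkₐ A (Ideal.map (algebraMap A B) I))), ?_, ?_⟩
    · exact Algebra.FormallySmooth.comp_lift (Ideal.map (algebraMap A B') I) hIB'nil _
    · intro g hg
      refine Algebra.FormallyUnramified.lift_unique (Ideal.map (algebraMap A B') I)
        hIB'nil _ _ ?_
      rw [hg, Algebra.FormallySmooth.comp_lift]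
  · -- any such lift is bijective
    intro f hf
    have hfq : ∀ b : B,
        Ideal.Quotient.mk (Ideal.map (algebraMap A B') I) (f b)
          = e (Ideal.Quotient.mk (Ideal.map (algebraMap A B) I) b) := fun b =>
      AlgHom.congr_fun hf b
    -- surjectivity
    have hsurj : Function.Surjective f := by
      have htop : (⊤ : Submodule A B') ≤
          LinearMap.range f.toLinearMap ⊔ I • (⊤ : Submodule A B') := by
        intro x _
        obtain ⟨q, hq⟩ := e.surjective (Ideal.Quotient.mk (Ideal.map (algebraMap A B') I) x)
        obtain ⟨b, rfl⟩ := Ideal.Quotient.mk_surjective q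
        have h0 : Ideal.Quotient.mk (Ideal.map (algebraMap A B') I) (x - f b) = 0 := by
          rw [map_sub, hfq, hq, sub_self]
        have hmem : x - f b ∈ I • (⊤ : Submodule A B') := by
          rw [Ideal.smul_top_eq_map, Submodule.restrictScalars_mem]
          exact Ideal.Quotient.eq_zero_iff_mem.mp h0
        have hx : x = f b + (x - f b) := by ring
        rw [hx]
        exact Submodule.add_mem_sup (LinearMap.mem_range_self f.toLinearMap b) hmem
      exact LinearMap.range_eq_top.mp
        (aux_eq_top_of_le_sup_smul_of_isNilpotent ⟨n, hn⟩ htop)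
    -- injectivity
    have hker : LinearMap.ker f.toLinearMap ≤ I • LinearMap.ker f.toLinearMap := by
      intro b hb
      have hb0 : f b = 0 := hb
      have hbIB : b ∈ Ideal.map (algebraMap A B) I := by
        apply Ideal.Quotient.eq_zero_iff_mem.mp
        apply e.injective
        rw [← hfq, hb0, map_zero, map_zero]
      have hbmem : b ∈ I • (⊤ : Submodule A B) := by
        rw [Ideal.smul_top_eq_map, Submodule.restrictScalars_mem]
        exact hbIB
      rw [show (⊤ : Submodule A B) = Submodule.span A (Set.range (id : B → B)) by
        simp [Submodule.span_univ]] at hbmem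
      obtain ⟨a, ha, hsum⟩ :=
        (Submodule.mem_ideal_smul_span_iff_exists_sum I (id : B → B) b).mp hbmem
      -- the relation ∑ a i • f i = 0 in B'
      have hrel : ∑ i : a.support, a i • f i = (0 : B') := by
        have h1 : f (a.sum fun i c => c • id i) = 0 := by rw [hsum, hb0]
        rw [Finsupp.sum] at h1
        rw [Finset.sum_coe_sort a.support (fun i => a i • f i)]
        simpa using h1
      obtain ⟨κ, t, y, hx, hty⟩ :=
        Module.Flat.isTrivialRelation_of_sum_smul_eq_zero (R := A) (M := B')
          (f := fun i : a.support => a i) (x := fun i : a.support => f i) hrel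
      choose z hz using hsurj
      have hkker : ∀ i : a.support,
          ((i : B) - ∑ j, t i j • z (y j)) ∈ LinearMap.ker f.toLinearMap := by
        intro i
        have : f ((i : B) - ∑ j, t i j • z (y j)) = 0 := by
          simp only [map_sub, map_sum, map_smul, hz]
          rw [← hx i, sub_self]
        exact this
      have hbrep : b = ∑ i : a.support, a i • ((i : B) - ∑ j, t i j • z (y j)) := by
        have h1 : b = ∑ i : a.support, a i • (i : B) := by
          rw [← hsum, Finsupp.sum]
          exact (Finset.sum_coe_sort a.support (fun i => a i • id i)).symm
        simp only [smul_sub]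
        rw [Finset.sum_sub_distrib, ← h1]
        have h2 : ∑ i : a.support, a i • ∑ j, t i j • z (y j) = 0 := by
          have hswap : ∑ i : a.support, a i • ∑ j, t i j • z (y j)
              = ∑ j, ∑ i : a.support, a i • (t i j • z (y j)) := by
            rw [Finset.sum_comm]
            exact Finset.sum_congr rfl fun i _ => Finset.smul_sum
          rw [hswap]
          refine Finset.sum_eq_zero fun j _ => ?_
          have h3 : ∑ i : a.support, a i • (t i j • z (y j))
              = (∑ i : a.support, a i * t i j) • z (y j) := by
            rw [Finset.sum_smul]
            exact Finset.sum_congr rfl fun i _ => by rw [smul_smul]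
          rw [h3, hty j, zero_smul]
        rw [h2, sub_zero]
      rw [hbrep]
      exact Submodule.sum_mem _ fun i _ => Submodule.smul_mem_smul (ha i) (hkker i)
    have hinj : Function.Injective f :=
      LinearMap.ker_eq_bot.mp (aux_eq_bot_of_le_smul_of_isNilpotent ⟨n, hn⟩ hker)
    exact ⟨hinj, hsurj⟩
end

section
/- Let A be a commutative ring, I a nilpotent ideal of A, and f : M → N a homomorphism of A-modules with N flat. If the induced map M/IM → N/IN is bijective, then f is bijective. -/
universe u v

open TensorProduct LinearMap

variable {A : Type u} [CommRing A] {P Q : Type v} [AddCommGroup P] [AddCommGroup Q]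
  [Module A P] [Module A Q]

/-- multiplication map I ⊗ P → P -/
noncomputable def mulMap (I : Ideal A) (P : Type v) [AddCommGroup P] [Module A P] :
    (I ⊗[A] P) →ₗ[A] P :=
  TensorProduct.lift ((LinearMap.lsmul A P).comp I.subtype)

lemma mulMap_tmul (I : Ideal A) (a : I) (p : P) : mulMap I P (a ⊗ₜ p) = (a : A) • p := rfl

lemma mulMap_natural (I : Ideal A) (g : P →ₗ[A] Q) :
    (mulMap I Q).comp (lTensor I g) = g.comp (mulMap I P) := by
  ext a p
  simp [mulMap_tmul]

lemma range_mulMap (I : Ideal A) : LinearMap.range (mulMap I P) = I • (⊤ : Submodule A P) := by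
  apply le_antisymm
  · rintro _ ⟨t, rfl⟩
    induction t using TensorProduct.induction_on with
    | zero => simp
    | tmul a p => exact Submodule.smul_mem_smul a.2 trivial
    | add x y hx hy => rw [map_add]; exact Submodule.add_mem _ hx hy
  · intro x hx
    refine Submodule.smul_induction_on hx ?_ ?_
    · intro a ha p _
      exact ⟨⟨a, ha⟩ ⊗ₜ p, rfl⟩
    · rintro x y ⟨s, rfl⟩ ⟨t, rfl⟩
      exact ⟨s + t, map_add _ _ _⟩
/-- Let `A` be a commutative ring, `I` a nilpotent ideal of `A`, and
`f : M → N` a homomorphism of `A`-modules with `N` flat. If the induced map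
`M/IM → N/IN` is bijective, then `f` is bijective. -/
theorem bijective_of_bijective_mod_nilpotent
    (A : Type u) [CommRing A] (M N : Type v) [AddCommGroup M] [AddCommGroup N]
    [Module A M] [Module A N] [Module.Flat A N]
    (I : Ideal A) (hI : IsNilpotent I) (f : M →ₗ[A] N)
    (hmod : Function.Bijective
      (Submodule.mapQ (I • (⊤ : Submodule A M)) (I • (⊤ : Submodule A N)) f
        (by
          rw [← Submodule.map_le_iff_le_comap, Submodule.map_smul'']
          exact Submodule.smul_mono le_rfl le_top))) :
    Function.Bijective f := by
  obtain ⟨n, hn⟩ := hI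
  set pM : Submodule A M := I • ⊤ with hpM
  set pN : Submodule A N := I • ⊤ with hpN
  -- surjectivity
  have hsup : LinearMap.range f ⊔ pN = ⊤ := by
    rw [eq_top_iff]
    intro y _
    obtain ⟨xbar, hx⟩ := hmod.surjective (Submodule.Quotient.mk y)
    obtain ⟨x, rfl⟩ := Submodule.Quotient.mk_surjective _ xbar
    rw [Submodule.mapQ_apply, Submodule.Quotient.eq] at hx
    rw [← sub_sub_cancel (f x) y]
    exact Submodule.sub_mem _ (Submodule.mem_sup_left ⟨x, rfl⟩) (Submodule.mem_sup_right hx)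
  have hsurj : Function.Surjective f := by
    rw [← LinearMap.range_eq_top, eq_top_iff]
    have key : ∀ k : ℕ, (⊤ : Submodule A N) ≤ LinearMap.range f ⊔ I ^ k • ⊤ := by
      intro k
      induction k with
      | zero => simp
      | succ k ih =>
        calc (⊤ : Submodule A N) = LinearMap.range f ⊔ pN := hsup.symm
          _ ≤ LinearMap.range f ⊔ I • (LinearMap.range f ⊔ I ^ k • ⊤) :=
              sup_le_sup_left (Submodule.smul_mono le_rfl (le_top.trans ih)) _
          _ = (LinearMap.range f ⊔ I • LinearMap.range f) ⊔ I • I ^ k • ⊤ := by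
              rw [Submodule.smul_sup, sup_assoc]
          _ ≤ LinearMap.range f ⊔ I ^ (k + 1) • ⊤ :=
              sup_le_sup (sup_le le_rfl Submodule.smul_le_right)
                (le_of_eq (by rw [pow_succ, mul_comm, ← Ideal.smul_eq_mul, Submodule.smul_assoc]))
    calc (⊤ : Submodule A N) ≤ LinearMap.range f ⊔ I ^ n • ⊤ := key n
      _ = LinearMap.range f := by rw [hn]; simp
  -- injectivity
  set K : Submodule A M := LinearMap.ker f with hK
  have hKle : K ≤ I • K := by
    intro x hx
    -- first, x ∈ I • ⊤ (from injectivity mod I)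
    have hxIM : x ∈ pM := by
      have h0 : Submodule.mapQ pM pN f (by
          rw [← Submodule.map_le_iff_le_comap, Submodule.map_smul'']
          exact Submodule.smul_mono le_rfl le_top) (Submodule.Quotient.mk x) = 0 := by
        rw [Submodule.mapQ_apply]
        simp only [hK, LinearMap.mem_ker] at hx
        rw [hx, Submodule.Quotient.mk_zero]
      have h1 : (Submodule.Quotient.mk x : M ⧸ pM) = Submodule.Quotient.mk 0 := by
        apply hmod.injective
        rw [h0, Submodule.Quotient.mk_zero, map_zero]
      rw [Submodule.Quotient.mk_zero, Submodule.Quotient.mk_eq_zero] at h1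
      exact h1
    -- lift to tensor
    rw [hpM, ← range_mulMap] at hxIM
    obtain ⟨t, ht⟩ := hxIM
    -- the exact sequence I ⊗ K → I ⊗ M → I ⊗ N
    have hexact : Function.Exact (LinearMap.lTensor I K.subtype) (LinearMap.lTensor I f) := by
      refine lTensor_exact (↥I) ?_ hsurj
      rw [LinearMap.exact_iff, hK, Submodule.range_subtype]
    have hNinj : Function.Injective (mulMap I N) := by
      have h1 : Function.Injective (LinearMap.rTensor N I.subtype) :=
        (Module.Flat.iff_rTensor_injective' (R := A) (M := N)).mp inferInstance I
      have h2 : mulMap I N = (TensorProduct.lid A N).toLinearMap.comp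
          (LinearMap.rTensor N I.subtype) := by
        ext a p
        simp [mulMap_tmul]
      rw [h2]
      exact (TensorProduct.lid A N).injective.comp h1
    have hft : LinearMap.lTensor I f t = 0 := by
      apply hNinj
      have := congrArg f ht
      rw [map_zero]
      have hnat := congrFun (congrArg DFunLike.coe (mulMap_natural I f)) t
      simp only [LinearMap.coe_comp, Function.comp_apply] at hnat
      rw [hnat, ht]
      simpa [hK, LinearMap.mem_ker] using hx
    obtain ⟨s, hs⟩ := (hexact t).mp hft
    have hnat := congrFun (congrArg DFunLike.coe (mulMap_natural I K.subtype)) s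
    simp only [LinearMap.coe_comp, Function.comp_apply] at hnat
    rw [← ht, ← hs, hnat]
    have : mulMap I K s ∈ I • (⊤ : Submodule A K) := by
      rw [← range_mulMap]; exact ⟨s, rfl⟩
    have h3 := Submodule.mem_map_of_mem (f := K.subtype) this
    rwa [Submodule.map_smul'', Submodule.map_top, Submodule.range_subtype] at h3
  have hKbot : K = ⊥ := by
    have key : ∀ k : ℕ, K ≤ I ^ k • K := by
      intro k
      induction k with
      | zero => simp
      | succ k ih =>
        calc K ≤ I • K := hKle
          _ ≤ I • I ^ k • K := Submodule.smul_mono le_rfl ih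
          _ = I ^ (k + 1) • K := by rw [pow_succ, mul_comm, ← Ideal.smul_eq_mul, Submodule.smul_assoc]
    have h2 := key n
    rw [hn] at h2
    rw [eq_bot_iff]
    exact h2.trans (by simp)
  constructor
  · rw [← LinearMap.ker_eq_bot, ← hK, hKbot]
  · exact hsurj
end

section
/- Let A be a commutative ring and I a nilpotent ideal of A such that the quotient map A → A/I admits a ring-homomorphism section s : A/I → A. Let R be a formally étale commutative A/I-algebra. Then B := R ⊗_{A/I} A, the base change of R along s, is a formally étale A-algebra with B ⊗_A A/I ≅ R, and B is unique up to A-algebra isomorphism among formally étale A-algebras with this property. Moreover, if R is flat over A/I, then B is flat over A and is unique up to A-algebra isomorphism among flat A-algebras B′ equipped with an A/I-algebra isomorphism B′ ⊗_A A/I ≅ R. -/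
universe u

open scoped TensorProduct

/-- A *lift* of an `A/I`-algebra `R` along `A → A/I`: a commutative `A`-algebra `B`
together with an isomorphism `B ⊗_A A/I ≅ B/IB ≅ R` (an `A`-algebra isomorphism, which is
the same thing as an `A/I`-algebra isomorphism). -/
structure AlgebraLift (A : Type u) [CommRing A] (I : Ideal A) (R : Type u) [CommRing R]
    [Algebra A R] : Type (u + 1) where
  carrier : Type u
  [commRing : CommRing carrier]
  [algebra : Algebra A carrier]
  reduction : (carrier ⧸ Ideal.map (algebraMap A carrier) I) ≃ₐ[A] R

attribute [instance] AlgebraLift.commRing AlgebraLift.algebra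

open TensorProduct



section ModuleAux

variable {A : Type*} [CommRing A] {M N : Type*} [AddCommGroup M] [Module A M]
  [AddCommGroup N] [Module A N]

lemma aux_smul_top_surjective (I : Ideal A) (hI : IsNilpotent I) (f : M →ₗ[A] N)
    (h : ∀ n : N, ∃ m : M, n - f m ∈ (I • ⊤ : Submodule A N)) : Function.Surjective f := by
  have htop : (⊤ : Submodule A N) ≤ LinearMap.range f ⊔ I • ⊤ := by
    intro n _
    obtain ⟨m, hm⟩ := h n
    have : n = f m + (n - f m) := by abel
    rw [this]
    exact Submodule.add_mem_sup (LinearMap.mem_range_self f m) hm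
  have key : ∀ k : ℕ, (⊤ : Submodule A N) ≤ LinearMap.range f ⊔ I ^ k • ⊤ := by
    intro k
    induction k with
    | zero => simpa using le_sup_right (a := LinearMap.range f)
    | succ k ih =>
      refine le_trans ih (sup_le le_sup_left ?_)
      have h1 : I ^ k • (⊤ : Submodule A N) ≤ I ^ k • (LinearMap.range f ⊔ I • ⊤) :=
        smul_mono_right _ htop
      refine le_trans h1 ?_
      rw [Submodule.smul_sup]
      refine sup_le (le_trans Submodule.smul_le_right le_sup_left) ?_
      rw [← Submodule.smul_assoc, Ideal.smul_eq_mul, ← pow_succ]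
      exact le_sup_right
  obtain ⟨n, hn⟩ := hI
  have := key n
  rw [hn] at this
  rw [show ((0 : Ideal A) • ⊤ : Submodule A N) = ⊥ from Submodule.bot_smul ⊤, sup_bot_eq, top_le_iff] at this
  exact LinearMap.range_eq_top.mp this

end ModuleAux

section Inj

variable {A : Type*} [CommRing A] {M N : Type*} [AddCommGroup M] [Module A M]
  [AddCommGroup N] [Module A N]

lemma aux_ker_le_smul_ker (I : Ideal A) [Module.Flat A N] (f : M →ₗ[A] N)
    (hf : Function.Surjective f) (hker : LinearMap.ker f ≤ I • ⊤) :
    LinearMap.ker f ≤ I • (LinearMap.ker f) := by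
  classical
  -- the evaluation maps
  set εM : I ⊗[A] M →ₗ[A] M := TensorProduct.lift ((LinearMap.lsmul A M).comp I.subtype) with hεM
  set εN : I ⊗[A] N →ₗ[A] N := TensorProduct.lift ((LinearMap.lsmul A N).comp I.subtype) with hεN
  have hεM_tmul : ∀ (i : I) (m : M), εM (i ⊗ₜ m) = (i : A) • m := fun i m => rfl
  have hεN_tmul : ∀ (i : I) (n : N), εN (i ⊗ₜ n) = (i : A) • n := fun i n => rfl
  -- εN is injective by flatness
  have hεN_inj : Function.Injective εN := by
    have h1 : Function.Injective (LinearMap.rTensor N I.subtype) :=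
      Module.Flat.iff_rTensor_injective'.mp inferInstance I
    have h2 : εN = (TensorProduct.lid A N).toLinearMap.comp (LinearMap.rTensor N I.subtype) := by
      apply TensorProduct.ext'
      intro i n
      simp [hεN_tmul]
    rw [h2]
    exact (TensorProduct.lid A N).injective.comp h1
  -- naturality
  have hnat : ∀ u : I ⊗[A] M, εN (LinearMap.lTensor I f u) = f (εM u) := by
    intro u
    induction u with
    | zero => simp
    | tmul i m => simp [hεM_tmul, hεN_tmul]
    | add x y hx hy => simp [map_add, hx, hy]
  -- range of εM covers I • ⊤
  have hrange : (I • ⊤ : Submodule A M) ≤ LinearMap.range εM := by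
    rw [Submodule.smul_le]
    intro r hr m _
    exact ⟨⟨r, hr⟩ ⊗ₜ m, rfl⟩
  -- the exactness
  intro x hx
  obtain ⟨u, hu⟩ := hrange (hker hx)
  have h0 : LinearMap.lTensor I f u = 0 := by
    apply hεN_inj
    rw [hnat, hu, map_zero]
    exact hx
  have hexact : Function.Exact (LinearMap.lTensor I (LinearMap.ker f).subtype)
      (LinearMap.lTensor I f) :=
    lTensor_exact I (LinearMap.exact_subtype_ker_map f) hf
  obtain ⟨v, hv⟩ := (hexact _).mp h0
  have claim : ∀ w : I ⊗[A] (LinearMap.ker f),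
      εM (LinearMap.lTensor I (LinearMap.ker f).subtype w) ∈ I • (LinearMap.ker f) := by
    intro w
    induction w with
    | zero => simp
    | tmul i k =>
      simpa [hεM_tmul] using Submodule.smul_mem_smul i.2 k.2
    | add a b ha hb => rw [map_add, map_add]; exact Submodule.add_mem _ ha hb
  have := claim v
  rwa [hv, hu] at this

lemma aux_bijective (I : Ideal A) (hI : IsNilpotent I) [Module.Flat A N] (f : M →ₗ[A] N)
    (hker : LinearMap.ker f ≤ I • ⊤)
    (hsur : ∀ n : N, ∃ m : M, n - f m ∈ (I • ⊤ : Submodule A N)) :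
    Function.Bijective f := by
  have hf : Function.Surjective f := aux_smul_top_surjective I hI f hsur
  have hk := aux_ker_le_smul_ker I f hf hker
  have key : ∀ n : ℕ, LinearMap.ker f ≤ I ^ n • LinearMap.ker f := by
    intro n
    induction n with
    | zero => simpa using Submodule.le_def.mp le_rfl
    | succ n ih =>
      refine le_trans ih ?_
      refine le_trans (smul_mono_right _ hk) ?_
      rw [← Submodule.smul_assoc, Ideal.smul_eq_mul, ← pow_succ]
  obtain ⟨n, hn⟩ := hI
  have : LinearMap.ker f ≤ I ^ n • LinearMap.ker f := key n
  rw [hn] at this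
  rw [show ((0 : Ideal A) • LinearMap.ker f : Submodule A M) = ⊥ from Submodule.bot_smul _] at this
  exact ⟨LinearMap.ker_eq_bot.mp (le_bot_iff.mp this), hf⟩

end Inj


section AlgAux

variable (A : Type u) [CommRing A] (I : Ideal A) [Algebra (A ⧸ I) A]
  (R : Type u) [CommRing R] [Algebra (A ⧸ I) R] [Algebra A R]
  [IsScalarTower A (A ⧸ I) R]
  (hs : (Ideal.Quotient.mk I).comp (algebraMap (A ⧸ I) A) = RingHom.id (A ⧸ I))

/-- The natural `A ⧸ I`-algebra hom `A →ₐ[A⧸I] R`. -/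
def auxFA : A →ₐ[A ⧸ I] R where
  toRingHom := algebraMap A R
  commutes' := fun c => by
    show algebraMap A R (algebraMap (A ⧸ I) A c) = algebraMap (A ⧸ I) R c
    rw [IsScalarTower.algebraMap_apply A (A ⧸ I) R]
    exact congrArg (algebraMap (A ⧸ I) R) (RingHom.congr_fun hs c)

/-- The reduction map `A ⊗[A⧸I] R →ₐ[A⧸I] R`. -/
noncomputable def auxF0 : (A ⊗[A ⧸ I] R) →ₐ[A ⧸ I] R :=
  Algebra.TensorProduct.productMap (auxFA A I R hs) (AlgHom.id (A ⧸ I) R)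

/-- The reduction map as an `A`-algebra hom. -/
noncomputable def auxF : (A ⊗[A ⧸ I] R) →ₐ[A] R where
  toRingHom := (auxF0 A I R hs).toRingHom
  commutes' := fun a => by
    show auxF0 A I R hs (algebraMap A (A ⊗[A ⧸ I] R) a) = algebraMap A R a
    rw [Algebra.TensorProduct.algebraMap_apply]
    show auxF0 A I R hs (a ⊗ₜ 1) = algebraMap A R a
    simp [auxF0, auxFA]

lemma auxF_tmul (a : A) (r : R) : auxF A I R hs (a ⊗ₜ r) = algebraMap A R a * r := rfl

lemma auxF_surjective : Function.Surjective (auxF A I R hs) := fun r =>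
  ⟨1 ⊗ₜ r, by rw [auxF_tmul]; simp⟩

end AlgAux

section Ker

variable (A : Type u) [CommRing A] (I : Ideal A) [Algebra (A ⧸ I) A]
  (R : Type u) [CommRing R] [Algebra (A ⧸ I) R] [Algebra A R]
  [IsScalarTower A (A ⧸ I) R]
  (hs : (Ideal.Quotient.mk I).comp (algebraMap (A ⧸ I) A) = RingHom.id (A ⧸ I))

lemma auxF_section (x : A ⊗[A ⧸ I] R) :
    Ideal.Quotient.mk (I.map (algebraMap A (A ⊗[A ⧸ I] R))) x
      = Ideal.Quotient.mk (I.map (algebraMap A (A ⊗[A ⧸ I] R)))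
          ((1 : A) ⊗ₜ auxF A I R hs x) := by
  set JB := I.map (algebraMap A (A ⊗[A ⧸ I] R)) with hJB
  induction x with
  | zero => simp
  | add x y hx hy =>
    rw [map_add, map_add, TensorProduct.tmul_add, map_add, hx, hy]
  | tmul a r =>
    have hfr : auxF A I R hs (a ⊗ₜ r) = algebraMap A R a * r := rfl
    rw [hfr]
    have hsplit : (1 : A) ⊗ₜ[A ⧸ I] (algebraMap A R a * r)
        = ((1 : A) ⊗ₜ[A ⧸ I] (algebraMap A R a)) * ((1 : A) ⊗ₜ[A ⧸ I] r) := by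
      rw [Algebra.TensorProduct.tmul_mul_tmul, one_mul]
    have hsplit2 : a ⊗ₜ[A ⧸ I] r = (a ⊗ₜ[A ⧸ I] (1 : R)) * ((1 : A) ⊗ₜ[A ⧸ I] r) := by
      rw [Algebra.TensorProduct.tmul_mul_tmul, one_mul, mul_one]
    rw [hsplit, hsplit2, map_mul, map_mul]
    congr 1
    have h2 : (1 : A) ⊗ₜ[A ⧸ I] (algebraMap A R a)
        = (algebraMap (A ⧸ I) A (Ideal.Quotient.mk I a)) ⊗ₜ[A ⧸ I] (1 : R) := by
      rw [IsScalarTower.algebraMap_apply A (A ⧸ I) R]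
      rw [← Algebra.TensorProduct.algebraMap_apply', Algebra.TensorProduct.algebraMap_apply,
        Ideal.Quotient.algebraMap_eq]
    rw [h2, Ideal.Quotient.eq]
    have h3 : a ⊗ₜ[A ⧸ I] (1 : R)
        - (algebraMap (A ⧸ I) A (Ideal.Quotient.mk I a)) ⊗ₜ[A ⧸ I] (1 : R)
        = algebraMap A (A ⊗[A ⧸ I] R) (a - algebraMap (A ⧸ I) A (Ideal.Quotient.mk I a)) := by
      rw [map_sub, Algebra.TensorProduct.algebraMap_apply, Algebra.TensorProduct.algebraMap_apply]
      simp
    rw [h3]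
    apply Ideal.mem_map_of_mem
    rw [← Ideal.Quotient.eq_zero_iff_mem, map_sub]
    rw [show (Ideal.Quotient.mk I) (algebraMap (A ⧸ I) A (Ideal.Quotient.mk I a))
        = Ideal.Quotient.mk I a from RingHom.congr_fun hs _]
    rw [sub_self]

lemma auxF_ker :
    RingHom.ker (auxF A I R hs) = I.map (algebraMap A (A ⊗[A ⧸ I] R)) := by
  apply le_antisymm
  · intro x hx
    have hx0 : auxF A I R hs x = 0 := hx
    have h := auxF_section A I R hs x
    rw [hx0, TensorProduct.tmul_zero, map_zero] at h
    exact Ideal.Quotient.eq_zero_iff_mem.mp h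
  · rw [Ideal.map_le_iff_le_comap]
    intro i hi
    show auxF A I R hs (algebraMap A (A ⊗[A ⧸ I] R) i) = 0
    rw [AlgHom.commutes, IsScalarTower.algebraMap_apply A (A ⧸ I) R,
      Ideal.Quotient.algebraMap_eq, Ideal.Quotient.eq_zero_iff_mem.mpr hi, map_zero]

/-- The reduction isomorphism `(A ⊗[A⧸I] R) ⧸ I·(A ⊗[A⧸I] R) ≃ₐ[A] R`. -/
noncomputable def auxE :
    ((A ⊗[A ⧸ I] R) ⧸ I.map (algebraMap A (A ⊗[A ⧸ I] R))) ≃ₐ[A] R :=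
  (Ideal.quotientEquivAlgOfEq A (auxF_ker A I R hs).symm).trans
    (Ideal.quotientKerAlgEquivOfSurjective (auxF_surjective A I R hs))

lemma auxE_mk (x : A ⊗[A ⧸ I] R) :
    auxE A I R hs (Ideal.Quotient.mk _ x) = auxF A I R hs x := by
  simp [auxE, Ideal.quotientEquivAlgOfEq, Ideal.quotientKerAlgEquivOfSurjective,
    Ideal.quotientKerAlgEquivOfRightInverse]
  rfl

end Ker

section Lift

variable (A : Type u) [CommRing A] (I : Ideal A) [Algebra (A ⧸ I) A]
  (R : Type u) [CommRing R] [Algebra (A ⧸ I) R] [Algebra A R]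
  [IsScalarTower A (A ⧸ I) R]
  (L : Type u) [CommRing L] [Algebra A L] [Algebra (A ⧸ I) L] [IsScalarTower (A ⧸ I) A L]
  [Algebra.FormallySmooth (A ⧸ I) R]

lemma aux_nilpotent_map (hI : IsNilpotent I) (S : Type u) [CommRing S] [Algebra A S] :
    IsNilpotent (Ideal.map (algebraMap A S) I) := by
  obtain ⟨n, hn⟩ := hI
  refine ⟨n, ?_⟩
  rw [← Ideal.map_pow, hn]
  exact Ideal.map_bot

/-- `red.symm` as an `A⧸I`-algebra hom. -/
noncomputable def auxRho0
    (hs : (Ideal.Quotient.mk I).comp (algebraMap (A ⧸ I) A) = RingHom.id (A ⧸ I))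
    (red : (L ⧸ Ideal.map (algebraMap A L) I) ≃ₐ[A] R) :
    R →ₐ[A ⧸ I] (L ⧸ Ideal.map (algebraMap A L) I) where
  toRingHom := (red.symm : R →ₐ[A] _).toRingHom
  commutes' := fun c => by
    show red.symm (algebraMap (A ⧸ I) R c) = algebraMap (A ⧸ I) _ c
    have h1 : algebraMap (A ⧸ I) R c = algebraMap A R (algebraMap (A ⧸ I) A c) := by
      rw [IsScalarTower.algebraMap_apply A (A ⧸ I) R]
      exact (congrArg (algebraMap (A ⧸ I) R) (RingHom.congr_fun hs c)).symm
    rw [h1, AlgEquiv.commutes,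
      IsScalarTower.algebraMap_apply A (A ⧸ I) (L ⧸ Ideal.map (algebraMap A L) I)]
    exact congrArg (algebraMap (A ⧸ I) (L ⧸ Ideal.map (algebraMap A L) I))
      (RingHom.congr_fun hs c)

/-- The quotient map `L → L ⧸ IL` as an `A⧸I`-algebra hom. -/
noncomputable def auxG
    (hs : (Ideal.Quotient.mk I).comp (algebraMap (A ⧸ I) A) = RingHom.id (A ⧸ I)) :
    L →ₐ[A ⧸ I] (L ⧸ Ideal.map (algebraMap A L) I) where
  toRingHom := Ideal.Quotient.mk (Ideal.map (algebraMap A L) I)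
  commutes' := fun c => by
    obtain ⟨a, rfl⟩ := Ideal.Quotient.mk_surjective c
    show Ideal.Quotient.mk _ (algebraMap (A ⧸ I) L (Ideal.Quotient.mk I a))
        = algebraMap (A ⧸ I) _ (Ideal.Quotient.mk I a)
    rw [Ideal.Quotient.algebraMap_quotient_map_quotient,
      IsScalarTower.algebraMap_apply (A ⧸ I) A L, Ideal.Quotient.eq, ← map_sub]
    apply Ideal.mem_map_of_mem
    rw [← Ideal.Quotient.eq_zero_iff_mem, map_sub,
      show Ideal.Quotient.mk I (algebraMap (A ⧸ I) A (Ideal.Quotient.mk I a))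
        = Ideal.Quotient.mk I a from RingHom.congr_fun hs _, sub_self]

lemma auxG_surjective
    (hs : (Ideal.Quotient.mk I).comp (algebraMap (A ⧸ I) A) = RingHom.id (A ⧸ I)) :
    Function.Surjective (auxG A I L hs) :=
  Ideal.Quotient.mk_surjective

lemma auxG_ker
    (hs : (Ideal.Quotient.mk I).comp (algebraMap (A ⧸ I) A) = RingHom.id (A ⧸ I)) :
    RingHom.ker ((auxG A I L hs) : L →+* (L ⧸ Ideal.map (algebraMap A L) I))
      = Ideal.map (algebraMap A L) I :=
  Ideal.mk_ker

/-- The lift of `red.symm` to a map `R →ₐ[A⧸I] L`. -/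
noncomputable def auxRho
    (hs : (Ideal.Quotient.mk I).comp (algebraMap (A ⧸ I) A) = RingHom.id (A ⧸ I))
    (hI : IsNilpotent I)
    (red : (L ⧸ Ideal.map (algebraMap A L) I) ≃ₐ[A] R) : R →ₐ[A ⧸ I] L :=
  Algebra.FormallySmooth.liftOfSurjective (auxRho0 A I R L hs red) (auxG A I L hs)
    (auxG_surjective A I L hs)
    (by rw [auxG_ker A I L hs]; exact aux_nilpotent_map A I hI L)

lemma auxRho_mk
    (hs : (Ideal.Quotient.mk I).comp (algebraMap (A ⧸ I) A) = RingHom.id (A ⧸ I))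
    (hI : IsNilpotent I)
    (red : (L ⧸ Ideal.map (algebraMap A L) I) ≃ₐ[A] R) (r : R) :
    Ideal.Quotient.mk (Ideal.map (algebraMap A L) I) (auxRho A I R L hs hI red r)
      = red.symm r :=
  Algebra.FormallySmooth.liftOfSurjective_apply (auxRho0 A I R L hs red) (auxG A I L hs)
    (auxG_surjective A I L hs)
    (by have h := aux_nilpotent_map A I hI L; rw [← auxG_ker A I L hs] at h; exact h) r

/-- The canonical comparison map `A ⊗[A⧸I] R →ₐ[A⧸I] L` for a lift `L`. -/
noncomputable def auxPhi0
    (hs : (Ideal.Quotient.mk I).comp (algebraMap (A ⧸ I) A) = RingHom.id (A ⧸ I))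
    (hI : IsNilpotent I)
    (red : (L ⧸ Ideal.map (algebraMap A L) I) ≃ₐ[A] R) : (A ⊗[A ⧸ I] R) →ₐ[A ⧸ I] L :=
  Algebra.TensorProduct.productMap (IsScalarTower.toAlgHom (A ⧸ I) A L)
    (auxRho A I R L hs hI red)

/-- The canonical comparison map as an `A`-algebra hom. -/
noncomputable def auxPhi
    (hs : (Ideal.Quotient.mk I).comp (algebraMap (A ⧸ I) A) = RingHom.id (A ⧸ I))
    (hI : IsNilpotent I)
    (red : (L ⧸ Ideal.map (algebraMap A L) I) ≃ₐ[A] R) : (A ⊗[A ⧸ I] R) →ₐ[A] L where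
  toRingHom := (auxPhi0 A I R L hs hI red).toRingHom
  commutes' := fun a => by
    show auxPhi0 A I R L hs hI red (algebraMap A (A ⊗[A ⧸ I] R) a) = algebraMap A L a
    rw [Algebra.TensorProduct.algebraMap_apply]
    show auxPhi0 A I R L hs hI red (a ⊗ₜ 1) = algebraMap A L a
    simp [auxPhi0]

lemma auxPhi_tmul
    (hs : (Ideal.Quotient.mk I).comp (algebraMap (A ⧸ I) A) = RingHom.id (A ⧸ I))
    (hI : IsNilpotent I)
    (red : (L ⧸ Ideal.map (algebraMap A L) I) ≃ₐ[A] R) (a : A) (r : R) :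
    auxPhi A I R L hs hI red (a ⊗ₜ r)
      = algebraMap A L a * auxRho A I R L hs hI red r := rfl

lemma auxPhi_mk
    (hs : (Ideal.Quotient.mk I).comp (algebraMap (A ⧸ I) A) = RingHom.id (A ⧸ I))
    (hI : IsNilpotent I)
    (red : (L ⧸ Ideal.map (algebraMap A L) I) ≃ₐ[A] R) (b : A ⊗[A ⧸ I] R) :
    Ideal.Quotient.mk (Ideal.map (algebraMap A L) I) (auxPhi A I R L hs hI red b)
      = red.symm (auxF A I R hs b) := by
  induction b with
  | zero => rw [map_zero, map_zero, map_zero, map_zero]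
  | add x y hx hy => rw [map_add, map_add, map_add, map_add, hx, hy]
  | tmul a r =>
    rw [auxPhi_tmul, map_mul, auxRho_mk]
    have h1 : auxF A I R hs (a ⊗ₜ r) = algebraMap A R a * r := rfl
    rw [h1, map_mul]
    congr 1
    rw [AlgEquiv.commutes]
    exact Ideal.Quotient.mk_algebraMap _ _ _

end Lift

theorem kato_aux
    (A : Type u) [CommRing A] (I : Ideal A) (hI : IsNilpotent I)
    [Algebra (A ⧸ I) A]
    (hs : (Ideal.Quotient.mk I).comp (algebraMap (A ⧸ I) A) = RingHom.id (A ⧸ I))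
    (R : Type u) [CommRing R] [Algebra (A ⧸ I) R] [Algebra A R]
    [IsScalarTower A (A ⧸ I) R] [Algebra.FormallyEtale (A ⧸ I) R] :
    (Algebra.FormallyEtale A (A ⊗[A ⧸ I] R) ∧
      Nonempty ((A ⊗[A ⧸ I] R ⧸ Ideal.map (algebraMap A (A ⊗[A ⧸ I] R)) I) ≃ₐ[A] R)) ∧
    (∀ L : AlgebraLift A I R, Algebra.FormallyEtale A L.carrier →
      Nonempty (L.carrier ≃ₐ[A] A ⊗[A ⧸ I] R)) ∧
    (Module.Flat (A ⧸ I) R →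
      Module.Flat A (A ⊗[A ⧸ I] R) ∧
      ∀ L : AlgebraLift A I R, Module.Flat A L.carrier →
        Nonempty (L.carrier ≃ₐ[A] A ⊗[A ⧸ I] R)) := by
  have hetale : Algebra.FormallyEtale A (A ⊗[A ⧸ I] R) := inferInstance
  set e := auxE A I R hs with he
  have nilpB : IsNilpotent (Ideal.map (algebraMap A (A ⊗[A ⧸ I] R)) I) :=
    aux_nilpotent_map A I hI (A ⊗[A ⧸ I] R)
  refine ⟨⟨hetale, ⟨e⟩⟩, ?_, ?_⟩
  · -- uniqueness among formally étale algebras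
    intro L hL
    letI : Algebra (A ⧸ I) L.carrier :=
      ((algebraMap A L.carrier).comp (algebraMap (A ⧸ I) A)).toAlgebra
    letI : IsScalarTower (A ⧸ I) A L.carrier := IsScalarTower.of_algebraMap_eq fun c => rfl
    haveI := hL
    set φ := auxPhi A I R L.carrier hs hI L.reduction with hφdef
    have nilpL : IsNilpotent (Ideal.map (algebraMap A L.carrier) I) :=
      aux_nilpotent_map A I hI L.carrier
    set g : L.carrier →ₐ[A] ((A ⊗[A ⧸ I] R) ⧸ Ideal.map (algebraMap A (A ⊗[A ⧸ I] R)) I) :=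
      (e.symm.toAlgHom.comp L.reduction.toAlgHom).comp
        (Ideal.Quotient.mkₐ A (Ideal.map (algebraMap A L.carrier) I)) with hg
    set ψ := Algebra.FormallySmooth.lift _ nilpB g with hψdef
    have hψ : ∀ l, Ideal.Quotient.mk (Ideal.map (algebraMap A (A ⊗[A ⧸ I] R)) I) (ψ l)
        = e.symm (L.reduction (Ideal.Quotient.mk (Ideal.map (algebraMap A L.carrier) I) l)) :=
      fun l => Algebra.FormallySmooth.mk_lift _ nilpB g l
    have h1 : ψ.comp φ = AlgHom.id A (A ⊗[A ⧸ I] R) := by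
      apply Algebra.FormallyUnramified.ext (I := Ideal.map (algebraMap A (A ⊗[A ⧸ I] R)) I) nilpB
      intro b
      rw [AlgHom.comp_apply, hψ, auxPhi_mk, AlgEquiv.apply_symm_apply, ← auxE_mk A I R hs b,
        ← he, AlgEquiv.symm_apply_apply, AlgHom.id_apply]
    have h2 : φ.comp ψ = AlgHom.id A L.carrier := by
      apply Algebra.FormallyUnramified.ext (I := Ideal.map (algebraMap A L.carrier) I) nilpL
      intro l
      rw [AlgHom.comp_apply, auxPhi_mk, ← auxE_mk A I R hs, ← he, hψ,
        AlgEquiv.apply_symm_apply, AlgEquiv.symm_apply_apply, AlgHom.id_apply]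
    exact ⟨AlgEquiv.ofAlgHom ψ φ h1 h2⟩
  · -- flat case
    intro hflat
    haveI := hflat
    have hBflat : Module.Flat A (A ⊗[A ⧸ I] R) := inferInstance
    refine ⟨hBflat, ?_⟩
    intro L hLflat
    haveI := hLflat
    letI : Algebra (A ⧸ I) L.carrier :=
      ((algebraMap A L.carrier).comp (algebraMap (A ⧸ I) A)).toAlgebra
    letI : IsScalarTower (A ⧸ I) A L.carrier := IsScalarTower.of_algebraMap_eq fun c => rfl
    set φ := auxPhi A I R L.carrier hs hI L.reduction with hφdef
    have hker : LinearMap.ker φ.toLinearMap ≤ I • (⊤ : Submodule A (A ⊗[A ⧸ I] R)) := by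
      intro x hx
      have hx0 : φ x = 0 := hx
      have h := auxPhi_mk A I R L.carrier hs hI L.reduction x
      rw [hx0, map_zero] at h
      have h2 : auxF A I R hs x = 0 := by
        apply L.reduction.symm.injective
        rw [← h, map_zero]
      have h3 : x ∈ RingHom.ker (auxF A I R hs) := h2
      rw [auxF_ker A I R hs] at h3
      rw [Ideal.smul_top_eq_map]
      exact h3
    have hsur : ∀ l : L.carrier, ∃ b : A ⊗[A ⧸ I] R,
        l - φ.toLinearMap b ∈ (I • ⊤ : Submodule A L.carrier) := by
      intro l
      refine ⟨(1 : A) ⊗ₜ (L.reduction (Ideal.Quotient.mk _ l)), ?_⟩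
      have h1 : auxF A I R hs ((1 : A) ⊗ₜ (L.reduction (Ideal.Quotient.mk _ l)))
          = L.reduction (Ideal.Quotient.mk _ l) := by
        rw [auxF_tmul A I R hs, map_one, one_mul]
      have h2 := auxPhi_mk A I R L.carrier hs hI L.reduction
        ((1 : A) ⊗ₜ (L.reduction (Ideal.Quotient.mk _ l)))
      rw [h1, AlgEquiv.symm_apply_apply] at h2
      have h3 : Ideal.Quotient.mk (Ideal.map (algebraMap A L.carrier) I)
          (l - φ ((1 : A) ⊗ₜ (L.reduction (Ideal.Quotient.mk _ l)))) = 0 := by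
        rw [map_sub, h2, sub_self]
      rw [Ideal.smul_top_eq_map]
      exact Ideal.Quotient.eq_zero_iff_mem.mp h3
    have hbij : Function.Bijective φ.toLinearMap :=
      aux_bijective I hI φ.toLinearMap hker hsur
    exact ⟨(AlgEquiv.ofBijective φ hbij).symm⟩

/-- Let `A` be a commutative ring and `I` a nilpotent ideal of `A` such
that the quotient map `A → A/I` admits a ring-homomorphism section `s : A/I → A`.  Let `R`
be a formally étale commutative `A/I`-algebra.  Then `B := R ⊗_{A/I} A`, the base change
of `R` along `s` (written below as `A ⊗[A/I] R`, with `A` an `A/I`-algebra via `s`), is a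
formally étale `A`-algebra with `B ⊗_A A/I ≅ R`, and `B` is unique up to `A`-algebra
isomorphism among formally étale `A`-algebras with this property.  Moreover, if `R` is
flat over `A/I`, then `B` is flat over `A` and is unique up to `A`-algebra isomorphism
among flat `A`-algebras `B'` equipped with an `A/I`-algebra isomorphism
`B' ⊗_A A/I ≅ R`. -/
theorem kato_lift_of_nilpotent_section
    (A : Type u) [CommRing A] (I : Ideal A) (hI : IsNilpotent I)
    (s : A ⧸ I →+* A) (hs : (Ideal.Quotient.mk I).comp s = RingHom.id (A ⧸ I))
    (R : Type u) [CommRing R] [Algebra (A ⧸ I) R] [Algebra A R]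
    [IsScalarTower A (A ⧸ I) R] [Algebra.FormallyEtale (A ⧸ I) R] :
    letI : Algebra (A ⧸ I) A := s.toAlgebra
    (Algebra.FormallyEtale A (A ⊗[A ⧸ I] R) ∧
      Nonempty ((A ⊗[A ⧸ I] R ⧸ Ideal.map (algebraMap A (A ⊗[A ⧸ I] R)) I) ≃ₐ[A] R)) ∧
    (∀ L : AlgebraLift A I R, Algebra.FormallyEtale A L.carrier →
      Nonempty (L.carrier ≃ₐ[A] A ⊗[A ⧸ I] R)) ∧
    (Module.Flat (A ⧸ I) R →
      Module.Flat A (A ⊗[A ⧸ I] R) ∧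
      ∀ L : AlgebraLift A I R, Module.Flat A L.carrier →
        Nonempty (L.carrier ≃ₐ[A] A ⊗[A ⧸ I] R)) := by
  letI : Algebra (A ⧸ I) A := s.toAlgebra
  exact kato_aux A I hI hs R
end

section
/- Let A be a discrete valuation ring with uniformizer π, and let B be a commutative A-algebra that is flat as an A-module, π-adically separated (⋂_{n≥0} πⁿB = 0), and such that B/πB is an integral domain. Then every unit x of the localization B[1/π] can be written x = πⁿ·u for a unique integer n ∈ ℤ and a unique unit u of B. Equivalently, there is a split short exact sequence of abelian groups 1 → B^× → B[1/π]^× → ℤ → 0, where the last map sends x = πⁿ·u to n. -/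
universe u

open scoped TensorProduct

section Aux

variable {B : Type u} [CommRing B] (p : B)

/-- Auxiliary: in a ring where `p` is prime and `p`-adically separated,
every nonzero element factors as `p ^ i * b'` with `p ∤ b'`. -/
lemma aux_factor_out (hsep : (⨅ n : ℕ, Ideal.span {p ^ n}) = (⊥ : Ideal B))
    {b : B} (hb : b ≠ 0) : ∃ i : ℕ, ∃ b' : B, b = p ^ i * b' ∧ ¬ p ∣ b' := by
  have hex : ∃ n : ℕ, ¬ p ^ n ∣ b := by
    by_contra h
    push_neg at h
    apply hb
    have : b ∈ (⨅ n : ℕ, Ideal.span {p ^ n}) := by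
      simp only [Ideal.mem_iInf, Ideal.mem_span_singleton]
      exact h
    rwa [hsep, Ideal.mem_bot] at this
  classical
  set N := Nat.find hex with hN
  have hN0 : N ≠ 0 := by
    intro h
    have := Nat.find_spec hex
    rw [← hN, h] at this
    exact this (by simp)
  have hdvd : p ^ (N - 1) ∣ b := by
    by_contra h
    have h2 : N ≤ N - 1 := Nat.find_le h
    omega
  obtain ⟨b', hb'⟩ := hdvd
  refine ⟨N - 1, b', hb', fun ⟨c, hc⟩ => ?_⟩
  apply Nat.find_spec hex
  rw [← hN]
  refine ⟨c, ?_⟩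
  calc b = p ^ (N - 1) * b' := hb'
    _ = p ^ (N - 1) * (p * c) := by rw [hc]
    _ = p ^ (N - 1 + 1) * c := by ring
    _ = p ^ N * c := by rw [Nat.sub_add_cancel (by omega)]

/-- Auxiliary main statement, over an abstract prime regular element `p`. -/
lemma aux_main (hprime : Prime p) (hreg : IsSMulRegular B p)
    (hsep : (⨅ n : ℕ, Ideal.span {p ^ n}) = (⊥ : Ideal B))
    (x : (Localization.Away p)ˣ) :
    ∃! nu : ℤ × Bˣ,
      x = (IsLocalization.map_units (Localization.Away p)
              (⟨p, Submonoid.mem_powers _⟩ : Submonoid.powers p)).unit ^ nu.1 *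
            Units.map (algebraMap B (Localization.Away p)).toMonoidHom nu.2 := by
  classical
  haveI : Nontrivial B := ⟨⟨p, 0, hprime.ne_zero⟩⟩
  have hcancel : ∀ (n : ℕ) (y z : B), p ^ n * y = p ^ n * z → y = z := by
    intro n y z h
    exact (hreg.pow n) (by simpa [smul_eq_mul] using h)
  have hpmem : p ∈ nonZeroDivisors B := by
    rw [mem_nonZeroDivisors_iff_right]
    intro z hz
    have : p • z = p • 0 := by simpa [smul_eq_mul, mul_comm] using hz
    exact hreg this
  have hle : Submonoid.powers p ≤ nonZeroDivisors B := Submonoid.powers_le.2 hpmem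
  have hinj : Function.Injective (algebraMap B (Localization.Away p)) :=
    IsLocalization.injective (Localization.Away p) hle
  set P : (Localization.Away p)ˣ := (IsLocalization.map_units (Localization.Away p)
      (⟨p, Submonoid.mem_powers _⟩ : Submonoid.powers p)).unit with hP
  have hPval : (P : Localization.Away p) = algebraMap B (Localization.Away p) p := rfl
  have hkey : ∀ (m n : ℤ) (w u : Bˣ), n ≤ m →
      P ^ m * Units.map (algebraMap B (Localization.Away p)).toMonoidHom w
        = P ^ n * Units.map (algebraMap B (Localization.Away p)).toMonoidHom u →
      m = n ∧ w = u := by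
    intro m n w u hnm heq
    obtain ⟨d, hmd⟩ : ∃ d : ℕ, m = n + d := ⟨(m - n).toNat, by omega⟩
    have heq2 : P ^ (d : ℤ) * Units.map (algebraMap B (Localization.Away p)).toMonoidHom w
        = Units.map (algebraMap B (Localization.Away p)).toMonoidHom u := by
      have h3 : P ^ n * (P ^ (d : ℤ) * Units.map (algebraMap B (Localization.Away p)).toMonoidHom w)
          = P ^ n * Units.map (algebraMap B (Localization.Away p)).toMonoidHom u := by
        rw [← mul_assoc, ← zpow_add, ← hmd]; exact heq
      exact mul_left_cancel h3
    have heqval : algebraMap B (Localization.Away p) (p ^ d * (w : B))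
        = algebraMap B (Localization.Away p) (u : B) := by
      have := congrArg (Units.val) heq2
      simpa [zpow_natCast, Units.val_pow_eq_pow_val, hPval, map_mul, map_pow] using this
    have heqB : p ^ d * (w : B) = (u : B) := hinj heqval
    have hd0 : d = 0 := by
      by_contra hdne
      apply hprime.not_unit
      have hdvd : p ∣ (u : B) := by
        rw [← heqB]
        exact dvd_mul_of_dvd_left (dvd_pow_self p hdne) _
      exact isUnit_of_dvd_unit hdvd u.isUnit
    have hmn : m = n := by omega
    refine ⟨hmn, ?_⟩
    ext
    apply hinj
    rw [← heqB, hd0]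
    simp
  obtain ⟨⟨b, s⟩, hbs⟩ := IsLocalization.surj (Submonoid.powers p)
    ((x : Localization.Away p))
  obtain ⟨⟨c, t⟩, hct⟩ := IsLocalization.surj (Submonoid.powers p)
    (((x⁻¹ : _ˣ) : Localization.Away p))
  obtain ⟨k, hk0⟩ := s.2
  obtain ⟨l, hl0⟩ := t.2
  have hk : p ^ k = (s : B) := hk0
  have hl : p ^ l = (t : B) := hl0
  have hbs' : (x : Localization.Away p) * algebraMap B (Localization.Away p) (s : B)
      = algebraMap B (Localization.Away p) b := hbs
  have hct' : ((x⁻¹ : _ˣ) : Localization.Away p) * algebraMap B (Localization.Away p) (t : B)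
      = algebraMap B (Localization.Away p) c := hct
  have hbc : b * c = p ^ (k + l) := by
    apply hinj
    have hxx : (x : Localization.Away p) * ((x⁻¹ : _ˣ) : Localization.Away p) = 1 := by
      rw [← Units.val_mul, mul_inv_cancel, Units.val_one]
    have h3 : algebraMap B (Localization.Away p) b * algebraMap B (Localization.Away p) c
        = algebraMap B (Localization.Away p) (s : B) * algebraMap B (Localization.Away p) (t : B) := by
      rw [← hbs', ← hct']
      calc (x : Localization.Away p) * algebraMap B (Localization.Away p) (s : B) *
            (((x⁻¹ : _ˣ) : Localization.Away p) * algebraMap B (Localization.Away p) (t : B))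
          = ((x : Localization.Away p) * ((x⁻¹ : _ˣ) : Localization.Away p)) *
            (algebraMap B (Localization.Away p) (s : B) * algebraMap B (Localization.Away p) (t : B)) := by
            ring
        _ = _ := by rw [hxx, one_mul]
    rw [map_mul, h3, ← hk, ← hl, ← map_mul, pow_add]
  have hpn0 : ∀ n : ℕ, p ^ n ≠ 0 := fun n h => by
    exact (IsSMulRegular.not_zero_iff.mpr inferInstance) (h ▸ hreg.pow n)
  have hbne : b ≠ 0 := by
    intro h
    rw [h, zero_mul] at hbc
    exact hpn0 _ hbc.symm
  obtain ⟨i, b', hb', hpb'⟩ := aux_factor_out p hsep hbne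
  have hcne : c ≠ 0 := by
    intro h
    rw [h, mul_zero] at hbc
    exact hpn0 _ hbc.symm
  obtain ⟨j, c', hc', hpc'⟩ := aux_factor_out p hsep hcne
  have hbc2 : p ^ (i + j) * (b' * c') = p ^ (k + l) := by
    rw [← hbc, hb', hc']; ring
  have hij : i + j = k + l := by
    rcases lt_trichotomy (i + j) (k + l) with h | h | h
    · exfalso
      obtain ⟨e, he⟩ : ∃ e : ℕ, k + l = (i + j) + (e + 1) := ⟨k + l - (i + j) - 1, by omega⟩
      have h2 : b' * c' = p ^ (e + 1) := by
        apply hcancel (i + j)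
        rw [hbc2, he, pow_add]
      have hdvd : p ∣ b' * c' := by
        rw [h2]; exact dvd_pow_self p (Nat.succ_ne_zero e)
      rcases hprime.dvd_mul.mp hdvd with h | h
      exacts [hpb' h, hpc' h]
    · exact h
    · exfalso
      obtain ⟨e, he⟩ : ∃ e : ℕ, i + j = (k + l) + (e + 1) := ⟨i + j - (k + l) - 1, by omega⟩
      have h2 : p ^ (e + 1) * (b' * c') = 1 := by
        apply hcancel (k + l)
        calc p ^ (k + l) * (p ^ (e + 1) * (b' * c'))
            = p ^ (i + j) * (b' * c') := by rw [he, pow_add]; ring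
          _ = p ^ (k + l) := hbc2
          _ = p ^ (k + l) * 1 := (mul_one _).symm
      apply hprime.not_unit
      apply isUnit_of_dvd_one
      exact ⟨p ^ e * (b' * c'), by rw [← h2, pow_succ']; ring⟩
  have hbc1 : b' * c' = 1 := by
    apply hcancel (i + j)
    rw [hbc2, mul_one, hij]
  set u : Bˣ := ⟨b', c', hbc1, by rw [mul_comm]; exact hbc1⟩ with hu
  have hgoal : x * P ^ (k : ℤ)
      = P ^ (i : ℤ) * Units.map (algebraMap B (Localization.Away p)).toMonoidHom u := by
    ext
    show (x : Localization.Away p) * (P ^ (k : ℤ) : _ˣ).val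
        = (P ^ (i : ℤ) : _ˣ).val * algebraMap B (Localization.Away p) (b' : B)
    rw [zpow_natCast, zpow_natCast, Units.val_pow_eq_pow_val, Units.val_pow_eq_pow_val, hPval]
    calc (x : Localization.Away p) * algebraMap B (Localization.Away p) p ^ k
        = (x : Localization.Away p) * algebraMap B (Localization.Away p) (p ^ k) := by
          rw [map_pow]
      _ = (x : Localization.Away p) * algebraMap B (Localization.Away p) (s : B) := by rw [hk]
      _ = algebraMap B (Localization.Away p) b := hbs'
      _ = algebraMap B (Localization.Away p) (p ^ i) * algebraMap B (Localization.Away p) b' := by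
          rw [hb', map_mul]
      _ = algebraMap B (Localization.Away p) p ^ i * algebraMap B (Localization.Away p) b' := by
          rw [map_pow]
  have hxrep : x = P ^ ((i : ℤ) - (k : ℤ)) *
      Units.map (algebraMap B (Localization.Away p)).toMonoidHom u := by
    have h1 : x = P ^ (i : ℤ) * Units.map (algebraMap B (Localization.Away p)).toMonoidHom u
        * (P ^ (k : ℤ))⁻¹ := eq_mul_inv_of_mul_eq hgoal
    rw [h1, zpow_sub, mul_right_comm]
  refine ⟨((i : ℤ) - (k : ℤ), u), hxrep, ?_⟩
  rintro ⟨m, w⟩ hmw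
  have heq : P ^ m * Units.map (algebraMap B (Localization.Away p)).toMonoidHom w
      = P ^ ((i : ℤ) - (k : ℤ)) * Units.map (algebraMap B (Localization.Away p)).toMonoidHom u := by
    rw [← hmw]; exact hxrep
  rcases le_total ((i : ℤ) - (k : ℤ)) m with h | h
  · obtain ⟨h1, h2⟩ := hkey m ((i : ℤ) - (k : ℤ)) w u h heq
    simp [Prod.ext_iff, h1, h2]
  · obtain ⟨h1, h2⟩ := hkey ((i : ℤ) - (k : ℤ)) m u w h heq.symm
    simp [Prod.ext_iff, h1.symm, h2.symm]

end Aux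

/-- Let `A` be a discrete valuation ring with uniformizer `π`, and let `B`
be a commutative `A`-algebra that is flat as an `A`-module, `π`-adically separated
(`⋂ n, πⁿB = 0`), and such that `B/πB` is an integral domain. Then every unit `x` of the
localization `B[1/π]` can be written `x = πⁿ · u` for a unique integer `n ∈ ℤ` and a unique
unit `u` of `B`.  (This is the content of the split short exact sequence
`1 → B^× → B[1/π]^× → ℤ → 0`.) -/
theorem exists_unique_zpow_uniformizer_factorization_units
    (A : Type u) [CommRing A] [IsDomain A] [IsDiscreteValuationRing A]
    (B : Type u) [CommRing B] [Algebra A B] [Module.Flat A B]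
    (π : A) (hπ : IsLocalRing.maximalIdeal A = Ideal.span {π})
    (hsep : (⨅ n : ℕ, Ideal.span {algebraMap A B π ^ n}) = ⊥)
    [IsDomain (B ⧸ Ideal.span {algebraMap A B π})]
    (x : (Localization.Away (algebraMap A B π))ˣ) :
    ∃! nu : ℤ × Bˣ,
      x = (IsLocalization.map_units (Localization.Away (algebraMap A B π))
              (⟨algebraMap A B π, Submonoid.mem_powers _⟩ :
                Submonoid.powers (algebraMap A B π))).unit ^ nu.1 *
            Units.map (algebraMap B (Localization.Away (algebraMap A B π))).toMonoidHom nu.2 := by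
  haveI : Nontrivial B := by
    rcases subsingleton_or_nontrivial B with h | h
    · haveI : Subsingleton (B ⧸ Ideal.span {algebraMap A B π}) :=
        Function.Surjective.subsingleton Ideal.Quotient.mk_surjective
      exact absurd (inferInstance : Nontrivial (B ⧸ Ideal.span {algebraMap A B π}))
        (not_nontrivial_iff_subsingleton.mpr inferInstance)
    · exact h
  have hπ0 : π ≠ 0 := by
    intro h
    apply IsDiscreteValuationRing.not_a_field A
    rw [hπ, h, Ideal.span_singleton_eq_bot.mpr rfl]
  have hregA : IsSMulRegular A π := by
    rw [← isLeftRegular_iff]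
    exact mul_right_injective₀ hπ0
  have hreg : IsSMulRegular B (algebraMap A B π) := by
    have h1 : IsSMulRegular (B ⊗[A] A) π := hregA.lTensor B
    have h2 : IsSMulRegular B π := ((TensorProduct.rid A B).isSMulRegular_congr π).mp h1
    exact (isSMulRegular_algebraMap_iff B (M := B) (r := π)).mpr h2
  have hp0 : algebraMap A B π ≠ 0 := by
    intro h
    exact (IsSMulRegular.not_zero_iff.mpr inferInstance) (h ▸ hreg)
  have hIprime : (Ideal.span {algebraMap A B π}).IsPrime :=
    (Ideal.Quotient.isDomain_iff_prime (Ideal.span {algebraMap A B π})).mp inferInstance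
  have hprime : Prime (algebraMap A B π) := (Ideal.span_singleton_prime hp0).mp hIprime
  exact aux_main (algebraMap A B π) hprime hreg hsep x
end

section
/- Let A be a discrete valuation ring with uniformizer π, and let B be a commutative A-algebra that is flat as an A-module and π-adically complete, such that B/πB is a field. Then B is an integral domain and a discrete valuation ring whose maximal ideal is πB, and the localization B[1/π] is a field, namely the fraction field of B. -/
universe u

open IsLocalRing
open scoped TensorProduct

/-- Let `A` be a discrete valuation ring with uniformizer `π`, and let `B`
be a commutative `A`-algebra that is flat as an `A`-module and `π`-adically complete, such
that `B/πB` is a field. Then `B` is an integral domain and a discrete valuation ring whose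
maximal ideal is `πB`, and the localization `B[1/π]` is a field, namely the fraction field
of `B`. -/
theorem discreteValuationRing_of_complete_flat_field_reduction
    (A : Type u) [CommRing A] [IsDomain A] [IsDiscreteValuationRing A]
    (B : Type u) [CommRing B] [Algebra A B] [Module.Flat A B]
    (π : A) (hπ : IsLocalRing.maximalIdeal A = Ideal.span {π})
    [IsAdicComplete (Ideal.span {algebraMap A B π}) B]
    (hfield : IsField (B ⧸ Ideal.span {algebraMap A B π})) :
    ∃ (hdom : IsDomain B) (hloc : IsLocalRing B),
      @IsDiscreteValuationRing B _ hdom ∧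
      @IsLocalRing.maximalIdeal B _ hloc = Ideal.span {algebraMap A B π} ∧
      IsField (Localization.Away (algebraMap A B π)) ∧
      IsFractionRing B (Localization.Away (algebraMap A B π)) := by
  classical
  set t : B := algebraMap A B π with ht
  set I : Ideal B := Ideal.span {t} with hI
  -- π ≠ 0
  have hπ0 : π ≠ 0 := by
    intro h
    exact IsDiscreteValuationRing.not_a_field A
      (by rw [hπ, h, Ideal.span_singleton_eq_bot])
  -- t is a nonzerodivisor, by flatness
  have hregA : IsSMulRegular A π := fun x y hxy => by
    simpa using mul_left_cancel₀ hπ0 (by simpa [smul_eq_mul] using hxy)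
  have hregB' : IsSMulRegular B π := by
    have h1 : IsSMulRegular (A ⊗[A] B) π := hregA.rTensor B
    exact h1.of_injective (TensorProduct.lid A B).symm.toLinearMap
      (TensorProduct.lid A B).symm.injective
  have hregB : IsSMulRegular B t :=
    (isSMulRegular_algebraMap_iff (A := B) (M := B) (r := π)).mpr hregB'
  have htnzd : t ∈ nonZeroDivisors B := by
    rw [mem_nonZeroDivisors_iff_right]
    intro x hx
    have : t • x = t • 0 := by simpa [smul_eq_mul, mul_comm] using hx
    exact hregB this
  -- B is nontrivial
  haveI hQnt : Nontrivial (B ⧸ I) := ⟨hfield.exists_pair_ne⟩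
  haveI hBnt : Nontrivial B := by
    refine ⟨0, 1, fun h => ?_⟩
    exact zero_ne_one (α := B ⧸ I)
      (by rw [← map_zero (Ideal.Quotient.mk I), h, map_one])
  have hIne : I ≠ ⊤ := by
    intro h
    have : (Ideal.Quotient.mk I) 1 = 0 := Ideal.Quotient.eq_zero_iff_mem.mpr (h ▸ trivial)
    simp at this
  have hImax : I.IsMaximal := Ideal.Quotient.maximal_of_isField _ hfield
  -- Local ring
  have hjac : I ≤ (⊥ : Ideal B).jacobson := IsAdicComplete.le_jacobson_bot (I := I)
  haveI hloc : IsLocalRing B := by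
    refine IsLocalRing.of_unique_max_ideal ⟨I, hImax, fun J hJ => ?_⟩
    have hIJ : I ≤ J := le_trans hjac (sInf_le ⟨bot_le, hJ⟩)
    exact (hImax.eq_of_le hJ.ne_top hIJ).symm
  have hmax_eq : IsLocalRing.maximalIdeal B = I := (IsLocalRing.eq_maximalIdeal hImax).symm
  -- Hausdorff property
  haveI hH : IsHausdorff I B := IsAdicComplete.toIsHausdorff
  have haus : ∀ b : B, (∀ n : ℕ, b ∈ I ^ n) → b = 0 := by
    intro b hb
    refine hH.haus b fun n => ?_
    rw [SModEq.zero]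
    simpa [smul_eq_mul, Ideal.mul_top] using hb n
  -- nonunits are in I
  have hunit : ∀ x : B, x ∉ I → IsUnit x := by
    intro x hx
    by_contra h
    exact hx (hmax_eq ▸ (IsLocalRing.mem_maximalIdeal x).mpr h)
  -- decomposition of nonzero elements
  have hdecomp : ∀ b : B, b ≠ 0 → ∃ (n : ℕ) (u : B), IsUnit u ∧ b = u * t ^ n := by
    intro b hb
    have hP : ∃ n, b ∉ I ^ n := by
      by_contra h
      push_neg at h
      exact hb (haus b h)
    set n := Nat.find hP with hn
    have hn1 : b ∉ I ^ n := Nat.find_spec hP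
    have hn0 : n ≠ 0 := by
      intro h
      exact hn1 (by rw [h, pow_zero, Ideal.one_eq_top]; trivial)
    have hmem : b ∈ I ^ (n - 1) := by
      by_contra h
      exact h (not_not.mp (Nat.find_min hP (Nat.pred_lt hn0)))
    rw [hI, Ideal.span_singleton_pow, Ideal.mem_span_singleton] at hmem
    obtain ⟨c, hc⟩ := hmem
    have hcI : c ∉ I := by
      intro hcmem
      rw [hI, Ideal.mem_span_singleton] at hcmem
      obtain ⟨d, rfl⟩ := hcmem
      apply hn1
      rw [hI, Ideal.span_singleton_pow, Ideal.mem_span_singleton, hc]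
      refine ⟨d, ?_⟩
      rw [← mul_assoc, ← pow_succ, Nat.sub_add_cancel (Nat.one_le_iff_ne_zero.mpr hn0)]
    exact ⟨n - 1, c, hunit c hcI, by rw [hc]; ring⟩
  have ht0 : t ≠ 0 := nonZeroDivisors.ne_zero htnzd
  -- B is a domain
  haveI : NoZeroDivisors B := by
    refine ⟨fun {a b} hab => ?_⟩
    by_contra h
    push_neg at h
    obtain ⟨ha, hb⟩ := h
    obtain ⟨m, u, hu, rfl⟩ := hdecomp a ha
    obtain ⟨n, v, hv, rfl⟩ := hdecomp b hb
    have h1 : (u * v) * t ^ (m + n) = 0 := by rw [← hab]; ring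
    have h2 : u * v = 0 := (mul_right_mem_nonZeroDivisors_eq_zero_iff (pow_mem htnzd (m + n))).mp h1
    exact (hu.mul hv).ne_zero h2
  haveI hdom : IsDomain B := NoZeroDivisors.to_isDomain B
  -- irreducibility and DVR
  have hirr : Irreducible t := IsDiscreteValuationRing.irreducible_of_span_eq_maximalIdeal t ht0 hmax_eq
  haveI hdvr : IsDiscreteValuationRing B := by
    refine IsDiscreteValuationRing.ofHasUnitMulPowIrreducibleFactorization ⟨t, hirr, ?_⟩
    intro x hx
    obtain ⟨n, u, hu, rfl⟩ := hdecomp x hx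
    exact ⟨n, hu.unit, by rw [IsUnit.unit_spec]; ring⟩
  -- fraction field
  have hpow_le : Submonoid.powers t ≤ nonZeroDivisors B := by
    rintro x ⟨n, rfl⟩
    exact pow_mem htnzd n
  haveI hfr : IsFractionRing B (Localization.Away t) := by
    refine IsLocalization.of_le (Submonoid.powers t) (nonZeroDivisors B) hpow_le ?_
    intro r hr
    have hr0 : r ≠ 0 := nonZeroDivisors.ne_zero hr
    obtain ⟨n, u, hu, rfl⟩ := hdecomp r hr0
    rw [map_mul, map_pow]
    exact ((hu.map (algebraMap B (Localization.Away t)))).mul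
      ((IsLocalization.map_units (Localization.Away t)
        (⟨t, Submonoid.mem_powers t⟩ : Submonoid.powers t)).pow n)
  letI : Field (Localization.Away t) := IsFractionRing.toField B
  exact ⟨hdom, hloc, hdvr, hmax_eq, Field.toIsField _, hfr⟩
end

section
/- Let A be a discrete valuation ring with maximal ideal m, and let A′ be a discrete valuation ring with maximal ideal m′, equipped with an A-algebra structure making A′ a finite free A-module, and such that m·A′ ⊆ m′ and m′^e ⊆ m·A′ for some integer e ≥ 1. Let B be a commutative A-algebra that is flat as an A-module and m-adically complete. Then B ⊗_A A′ is flat as an A′-module, m′-adically complete, and its reduction (B ⊗_A A′)/m′(B ⊗_A A′) is canonically isomorphic to (B/mB) ⊗_{A/m} (A′/m′). -/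
set_option maxHeartbeats 1000000
set_option synthInstance.maxHeartbeats 400000

universe u

open scoped TensorProduct
open Submodule

open Submodule

section Aux
variable {R M N : Type*} [CommRing R] [AddCommGroup M] [Module R M]
  [AddCommGroup N] [Module R N] {I : Ideal R}

theorem myAdic_congr {R₂ : Type*} [CommRing R₂] [Module R₂ M] {J : Ideal R₂}
    (h : ∀ (n : ℕ) (x : M), x ∈ (I ^ n • ⊤ : Submodule R M) ↔ x ∈ (J ^ n • ⊤ : Submodule R₂ M))
    (hc : IsAdicComplete I M) : IsAdicComplete J M := by
  haveI : IsHausdorff J M := by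
    constructor
    intro x hx
    refine hc.haus x fun n => ?_
    exact SModEq.zero.mpr ((h n x).mpr (SModEq.zero.mp (hx n)))
  haveI : IsPrecomplete J M := by
    constructor
    intro f hf
    obtain ⟨L, hL⟩ := hc.prec (f := f) (fun {m n} hmn =>
      SModEq.sub_mem.mpr ((h m _).mpr (SModEq.sub_mem.mp (hf hmn))))
    exact ⟨L, fun n => SModEq.sub_mem.mpr ((h n _).mp (SModEq.sub_mem.mp (hL n)))⟩
  constructor

theorem myAdic_equiv (e : M ≃ₗ[R] N) (hc : IsAdicComplete I M) : IsAdicComplete I N := by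
  have hmem : ∀ (n : ℕ) (x : N),
      x ∈ (I ^ n • ⊤ : Submodule R N) ↔ e.symm x ∈ (I ^ n • ⊤ : Submodule R M) := by
    intro n x
    constructor
    · intro hx
      have : e.symm x ∈ (I ^ n • ⊤ : Submodule R N).map (e.symm : N →ₗ[R] M) :=
        Submodule.mem_map_of_mem hx
      rwa [Submodule.map_smul'', Submodule.map_top, LinearEquiv.range] at this
    · intro hx
      have : e (e.symm x) ∈ (I ^ n • ⊤ : Submodule R M).map (e : M →ₗ[R] N) :=
        Submodule.mem_map_of_mem hx
      rwa [Submodule.map_smul'', Submodule.map_top, LinearEquiv.range,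
        e.apply_symm_apply] at this
  haveI : IsHausdorff I N := by
    constructor
    intro x hx
    have h0 : e.symm x = 0 := hc.haus _ fun n =>
      SModEq.zero.mpr ((hmem n x).mp (SModEq.zero.mp (hx n)))
    have := congrArg e h0
    simpa using this
  haveI : IsPrecomplete I N := by
    constructor
    intro f hf
    obtain ⟨L, hL⟩ := hc.prec (f := fun n => e.symm (f n)) (fun {m n} hmn => by
      refine SModEq.sub_mem.mpr ?_
      show e.symm (f m) - e.symm (f n) ∈ _
      rw [← map_sub]
      exact (hmem m _).mp (SModEq.sub_mem.mp (hf hmn)))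
    refine ⟨e L, fun n => SModEq.sub_mem.mpr ((hmem n _).mpr ?_)⟩
    rw [map_sub, e.symm_apply_apply]
    exact SModEq.sub_mem.mp (hL n)
  constructor

theorem myAdic_pi {ι : Type*} [Fintype ι] (hc : IsAdicComplete I M) :
    IsAdicComplete I (ι → M) := by
  classical
  have hmem : ∀ (n : ℕ) (x : ι → M),
      x ∈ (I ^ n • ⊤ : Submodule R (ι → M)) ↔ ∀ i, x i ∈ (I ^ n • ⊤ : Submodule R M) := by
    intro n x
    constructor
    · intro hx i
      have : x i ∈ (I ^ n • ⊤ : Submodule R (ι → M)).map (LinearMap.proj i) :=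
        Submodule.mem_map_of_mem hx
      rw [Submodule.map_smul''] at this
      exact Submodule.smul_mono le_rfl le_top this
    · intro hx
      have hx2 : x = ∑ i, Pi.single i (x i) := by
        ext j; simp [Finset.sum_apply, Pi.single_apply]
      rw [hx2]
      refine Submodule.sum_mem _ fun i _ => ?_
      have : (LinearMap.single R (fun _ : ι => M) i) (x i) ∈
          (I ^ n • ⊤ : Submodule R M).map (LinearMap.single R (fun _ : ι => M) i) :=
        Submodule.mem_map_of_mem (hx i)
      rw [Submodule.map_smul''] at this
      exact Submodule.smul_mono le_rfl le_top this
  haveI : IsHausdorff I (ι → M) := by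
    constructor
    intro x hx
    funext i
    refine hc.haus _ fun n => ?_
    exact SModEq.zero.mpr ((hmem n x).mp (SModEq.zero.mp (hx n)) i)
  haveI : IsPrecomplete I (ι → M) := by
    constructor
    intro f hf
    have key : ∀ i, ∃ L : M, ∀ n, (f n i) ≡ L [SMOD (I ^ n • ⊤ : Submodule R M)] := by
      intro i
      refine hc.prec (f := fun n => f n i) (fun {m n} hmn => ?_)
      exact SModEq.sub_mem.mpr ((hmem m _).mp (SModEq.sub_mem.mp (hf hmn)) i)
    choose L hL using key
    refine ⟨L, fun n => SModEq.sub_mem.mpr ((hmem n _).mpr fun i => ?_)⟩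
    exact SModEq.sub_mem.mp (hL i n)
  constructor

theorem myAdic_pow_le {T : Type*} [CommRing T] {I J : Ideal T}
    (hIJ : I ≤ J) {e : ℕ} (he : 1 ≤ e) (hJI : J ^ e ≤ I)
    (hc : IsAdicComplete I T) : IsAdicComplete J T := by
  have hsm : ∀ (K : Ideal T) (n : ℕ) (x : T),
      x ∈ (K ^ n • ⊤ : Ideal T) ↔ x ∈ K ^ n := by
    intro K n x
    rw [smul_eq_mul, Ideal.mul_top]
  have hJIn : ∀ n, J ^ (n * e) ≤ I ^ n := fun n => by
    rw [mul_comm, pow_mul]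
    exact Ideal.pow_right_mono hJI n
  have hIJn : ∀ n, I ^ n ≤ J ^ n := fun n => Ideal.pow_right_mono hIJ n
  have hle : ∀ n : ℕ, n ≤ n * e := fun n => Nat.le_mul_of_pos_right n (by omega)
  haveI : IsHausdorff J T := by
    constructor
    intro x hx
    refine hc.haus x fun n => ?_
    exact SModEq.zero.mpr ((hsm I n x).mpr
      (hJIn n ((hsm J (n * e) x).mp (SModEq.zero.mp (hx (n * e))))))
  haveI : IsPrecomplete J T := by
    constructor
    intro f hf
    obtain ⟨L, hL⟩ := hc.prec (f := fun n => f (n * e)) (fun {m n} hmn =>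
      SModEq.sub_mem.mpr ((hsm I m _).mpr
        (hJIn m ((hsm J (m * e) _).mp (SModEq.sub_mem.mp (hf (Nat.mul_le_mul_right e hmn)))))))
    refine ⟨L, fun n => ?_⟩
    have h1 : f n ≡ f (n * e) [SMOD (J ^ n • ⊤ : Ideal T)] := by
      exact hf (hle n)
    have h2 : f (n * e) ≡ L [SMOD (J ^ n • ⊤ : Ideal T)] := by
      refine SModEq.sub_mem.mpr ((hsm J n _).mpr ?_)
      exact hIJn n ((hsm I n _).mp (SModEq.sub_mem.mp (hL n)))
    exact h1.trans h2
  constructor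

end Aux

theorem myQuotIso
    (A A' : Type u) [CommRing A] [CommRing A'] [Algebra A A']
    (m : Ideal A) (m' : Ideal A')
    (h1 : m.map (algebraMap A A') ≤ m')
    (B : Type u) [CommRing B] [Algebra A B] :
    letI : Algebra (A ⧸ m) (B ⧸ m.map (algebraMap A B)) :=
      (Ideal.quotientMap _ (algebraMap A B) Ideal.le_comap_map).toAlgebra
    letI : Algebra (A ⧸ m) (A' ⧸ m') :=
      (Ideal.quotientMap _ (algebraMap A A') (Ideal.map_le_iff_le_comap.mp h1)).toAlgebra
    Nonempty
      (((A' ⊗[A] B) ⧸ m'.map (algebraMap A' (A' ⊗[A] B))) ≃+*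
        ((B ⧸ m.map (algebraMap A B)) ⊗[A ⧸ m] (A' ⧸ m'))) := by
  letI algkB : Algebra (A ⧸ m) (B ⧸ m.map (algebraMap A B)) :=
    (Ideal.quotientMap _ (algebraMap A B) Ideal.le_comap_map).toAlgebra
  letI algkA' : Algebra (A ⧸ m) (A' ⧸ m') :=
    (Ideal.quotientMap _ (algebraMap A A') (Ideal.map_le_iff_le_comap.mp h1)).toAlgebra
  letI tow1 : IsScalarTower A (A ⧸ m) (B ⧸ m.map (algebraMap A B)) :=
    IsScalarTower.of_algebraMap_eq (fun a => rfl)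
  letI tow2 : IsScalarTower A (A ⧸ m) (A' ⧸ m') :=
    IsScalarTower.of_algebraMap_eq (fun a => rfl)
  set T := A' ⊗[A] B with hT
  set J : Ideal T := m'.map (algebraMap A' T) with hJ
  -- key identity in T
  have key : ∀ a : A, (algebraMap A' T (algebraMap A A' a)) = 1 ⊗ₜ[A] (algebraMap A B a) := by
    intro a
    show (algebraMap A A' a) ⊗ₜ[A] (1 : B) = 1 ⊗ₜ[A] (algebraMap A B a)
    rw [Algebra.algebraMap_eq_smul_one (R := A) (A := A'), TensorProduct.smul_tmul,
      ← Algebra.algebraMap_eq_smul_one]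
  have hmT : ∀ a : A, a ∈ m → Ideal.Quotient.mk J (algebraMap A T a) = 0 := by
    intro a ha
    rw [Ideal.Quotient.eq_zero_iff_mem, hJ]
    have : algebraMap A T a = algebraMap A' T (algebraMap A A' a) := by
      rw [IsScalarTower.algebraMap_eq A A' T]; rfl
    rw [this]
    exact Ideal.mem_map_of_mem _ (h1 (Ideal.mem_map_of_mem _ ha))
  -- algebra k (T ⧸ J)
  letI algkT : Algebra (A ⧸ m) (T ⧸ J) :=
    (Ideal.Quotient.lift m ((Ideal.Quotient.mk J).comp (algebraMap A T))
      (fun a ha => hmT a ha)).toAlgebra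
  -- the maps u, v
  have hkerB : ∀ x ∈ m.map (algebraMap A B),
      (Ideal.Quotient.mk J).comp (Algebra.TensorProduct.includeRight.toRingHom : B →+* T) x = 0 := by
    intro x hx
    have : m.map (algebraMap A B) ≤ RingHom.ker
        ((Ideal.Quotient.mk J).comp (Algebra.TensorProduct.includeRight.toRingHom : B →+* T)) := by
      rw [Ideal.map_le_iff_le_comap]
      intro a ha
      show (Ideal.Quotient.mk J) ((1 : A') ⊗ₜ[A] (algebraMap A B a)) = 0
      rw [← key a]
      have : algebraMap A' T (algebraMap A A' a) = algebraMap A T a := by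
        rw [IsScalarTower.algebraMap_eq A A' T]; rfl
      rw [this]
      exact hmT a ha
    exact this hx
  let u : (B ⧸ m.map (algebraMap A B)) →ₐ[A ⧸ m] (T ⧸ J) :=
    { toRingHom := Ideal.Quotient.lift (m.map (algebraMap A B))
        ((Ideal.Quotient.mk J).comp (Algebra.TensorProduct.includeRight.toRingHom : B →+* T))
        hkerB
      commutes' := by
        intro r
        obtain ⟨a, rfl⟩ := Ideal.Quotient.mk_surjective r
        show Ideal.Quotient.mk J ((1 : A') ⊗ₜ[A] (algebraMap A B a)) =
          Ideal.Quotient.mk J (algebraMap A T a)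
        rw [← key a]
        congr 1 }
  have hkerA' : ∀ x ∈ m', (Ideal.Quotient.mk J).comp (algebraMap A' T) x = 0 := by
    intro x hx
    show Ideal.Quotient.mk J (algebraMap A' T x) = 0
    rw [Ideal.Quotient.eq_zero_iff_mem]
    exact Ideal.mem_map_of_mem _ hx
  let v : (A' ⧸ m') →ₐ[A ⧸ m] (T ⧸ J) :=
    { toRingHom := Ideal.Quotient.lift m' ((Ideal.Quotient.mk J).comp (algebraMap A' T)) hkerA'
      commutes' := by
        intro r
        obtain ⟨a, rfl⟩ := Ideal.Quotient.mk_surjective r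
        show Ideal.Quotient.mk J (algebraMap A' T (algebraMap A A' a)) =
          Ideal.Quotient.mk J (algebraMap A T a)
        congr 1 }
  let χ : ((B ⧸ m.map (algebraMap A B)) ⊗[A ⧸ m] (A' ⧸ m')) →+* (T ⧸ J) :=
    (Algebra.TensorProduct.productMap u v).toRingHom
  -- forward map
  let f : A' →ₐ[A] ((B ⧸ m.map (algebraMap A B)) ⊗[A ⧸ m] (A' ⧸ m')) :=
    ((Algebra.TensorProduct.includeRight :
        (A' ⧸ m') →ₐ[A ⧸ m] ((B ⧸ m.map (algebraMap A B)) ⊗[A ⧸ m] (A' ⧸ m'))).restrictScalars A).comp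
      (Ideal.Quotient.mkₐ A m')
  let g : B →ₐ[A] ((B ⧸ m.map (algebraMap A B)) ⊗[A ⧸ m] (A' ⧸ m')) :=
    (Algebra.TensorProduct.includeLeft).comp (Ideal.Quotient.mkₐ A (m.map (algebraMap A B)))
  let φ : T →ₐ[A] ((B ⧸ m.map (algebraMap A B)) ⊗[A ⧸ m] (A' ⧸ m')) :=
    Algebra.TensorProduct.productMap f g
  have hkerφ : ∀ x ∈ J, φ x = 0 := by
    intro x hx
    have : J ≤ RingHom.ker φ.toRingHom := by
      rw [hJ, Ideal.map_le_iff_le_comap]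
      intro a' ha'
      show φ (algebraMap A' T a') = 0
      have h0 : algebraMap A' T a' = a' ⊗ₜ[A] (1 : B) := rfl
      rw [h0]
      show f a' * g 1 = 0
      rw [map_one, mul_one]
      show (1 : B ⧸ m.map (algebraMap A B)) ⊗ₜ[A ⧸ m] (Ideal.Quotient.mk m' a') = 0
      rw [Ideal.Quotient.eq_zero_iff_mem.mpr ha', TensorProduct.tmul_zero]
    exact this hx
  let ψ : (T ⧸ J) →+* ((B ⧸ m.map (algebraMap A B)) ⊗[A ⧸ m] (A' ⧸ m')) :=
    Ideal.Quotient.lift J φ.toRingHom hkerφ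
  -- the two computations
  have hψ : ∀ (a' : A') (b : B), ψ (Ideal.Quotient.mk J (a' ⊗ₜ[A] b)) =
      (Ideal.Quotient.mk (m.map (algebraMap A B)) b) ⊗ₜ[A ⧸ m] (Ideal.Quotient.mk m' a') := by
    intro a' b
    show φ (a' ⊗ₜ[A] b) = _
    show f a' * g b = _
    show ((1 : B ⧸ m.map (algebraMap A B)) ⊗ₜ[A ⧸ m] (Ideal.Quotient.mk m' a')) *
      ((Ideal.Quotient.mk (m.map (algebraMap A B)) b) ⊗ₜ[A ⧸ m] 1) = _
    rw [Algebra.TensorProduct.tmul_mul_tmul, one_mul, mul_one]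
  have hχ : ∀ (a' : A') (b : B),
      χ ((Ideal.Quotient.mk (m.map (algebraMap A B)) b) ⊗ₜ[A ⧸ m] (Ideal.Quotient.mk m' a')) =
      Ideal.Quotient.mk J (a' ⊗ₜ[A] b) := by
    intro a' b
    show (Algebra.TensorProduct.productMap u v)
      ((Ideal.Quotient.mk (m.map (algebraMap A B)) b) ⊗ₜ[A ⧸ m] (Ideal.Quotient.mk m' a')) = _
    rw [Algebra.TensorProduct.productMap_apply_tmul]
    show (Ideal.Quotient.mk J ((1 : A') ⊗ₜ[A] b)) * (Ideal.Quotient.mk J (algebraMap A' T a')) = _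
    rw [← map_mul]
    congr 1
    show ((1 : A') ⊗ₜ[A] b) * (a' ⊗ₜ[A] (1 : B)) = a' ⊗ₜ[A] b
    rw [Algebra.TensorProduct.tmul_mul_tmul, one_mul, mul_one]
  refine ⟨{ toFun := ψ, invFun := χ, map_mul' := map_mul ψ, map_add' := map_add ψ,
            left_inv := ?_, right_inv := ?_ }⟩
  · intro x
    obtain ⟨t, rfl⟩ := Ideal.Quotient.mk_surjective x
    induction t using TensorProduct.induction_on with
    | zero => simp
    | tmul a' b => rw [hψ, hχ]
    | add s t hs ht => rw [map_add, map_add, map_add, hs, ht]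
  · intro x
    induction x using TensorProduct.induction_on with
    | zero => simp
    | tmul bb aa =>
      obtain ⟨b, rfl⟩ := Ideal.Quotient.mk_surjective bb
      obtain ⟨a', rfl⟩ := Ideal.Quotient.mk_surjective aa
      rw [hχ, hψ]
    | add s t hs ht =>
      show ψ (χ (s + t)) = s + t
      rw [map_add, map_add, hs, ht]

/-- Let `A ⊆ A'` be discrete valuation rings with maximal ideals `m`,
`m'`, with `A'` finite free as an `A`-module, `m·A' ⊆ m'` and `m'^e ⊆ m·A'` for some
`e ≥ 1`.  Let `B` be a flat, `m`-adically complete commutative `A`-algebra.  Then the base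
change `A' ⊗[A] B` is flat as an `A'`-module, `m'`-adically complete, and its reduction
modulo `m'` is canonically isomorphic to `(B/mB) ⊗[A/m] (A'/m')`. -/
theorem baseChange_of_complete_flat_dvr
    (A A' : Type u) [CommRing A] [CommRing A'] [IsDomain A] [IsDomain A']
    [IsDiscreteValuationRing A] [IsDiscreteValuationRing A']
    [Algebra A A'] [Module.Finite A A'] [Module.Free A A']
    (h1 : (IsLocalRing.maximalIdeal A).map (algebraMap A A') ≤ IsLocalRing.maximalIdeal A')
    (e : ℕ) (he : 1 ≤ e)
    (h2 : IsLocalRing.maximalIdeal A' ^ e ≤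
      (IsLocalRing.maximalIdeal A).map (algebraMap A A'))
    (B : Type u) [CommRing B] [Algebra A B] [Module.Flat A B]
    [IsAdicComplete (IsLocalRing.maximalIdeal A) B] :
    letI : Algebra (A ⧸ IsLocalRing.maximalIdeal A)
        (B ⧸ (IsLocalRing.maximalIdeal A).map (algebraMap A B)) :=
      (Ideal.quotientMap _ (algebraMap A B) Ideal.le_comap_map).toAlgebra
    letI : Algebra (A ⧸ IsLocalRing.maximalIdeal A) (A' ⧸ IsLocalRing.maximalIdeal A') :=
      (Ideal.quotientMap _ (algebraMap A A') (Ideal.map_le_iff_le_comap.mp h1)).toAlgebra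
    Module.Flat A' (A' ⊗[A] B) ∧
    IsAdicComplete ((IsLocalRing.maximalIdeal A').map (algebraMap A' (A' ⊗[A] B)))
      (A' ⊗[A] B) ∧
    Nonempty
      (((A' ⊗[A] B) ⧸ (IsLocalRing.maximalIdeal A').map (algebraMap A' (A' ⊗[A] B))) ≃+*
        ((B ⧸ (IsLocalRing.maximalIdeal A).map (algebraMap A B)) ⊗[A ⧸ IsLocalRing.maximalIdeal A]
          (A' ⧸ IsLocalRing.maximalIdeal A'))) := by
  refine ⟨inferInstance, ?_, ?_⟩
  · -- completeness
    set m := IsLocalRing.maximalIdeal A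
    set m' := IsLocalRing.maximalIdeal A'
    let ι := Module.Free.ChooseBasisIndex A A'
    let b : Module.Basis ι A A' := Module.Free.chooseBasis A A'
    let E : A' ⊗[A] B ≃ₗ[A] (ι → B) :=
      (TensorProduct.congr b.repr (LinearEquiv.refl A B)) ≪≫ₗ
        (TensorProduct.finsuppScalarLeft A B ι) ≪≫ₗ
        (Finsupp.linearEquivFunOnFinite A B ι)
    have hT_A : IsAdicComplete m (A' ⊗[A] B) :=
      myAdic_equiv E.symm (myAdic_pi inferInstance)
    have hmap : ∀ (n : ℕ) (x : A' ⊗[A] B),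
        x ∈ (m ^ n • ⊤ : Submodule A (A' ⊗[A] B)) ↔
          x ∈ ((m.map (algebraMap A (A' ⊗[A] B))) ^ n • ⊤ :
            Submodule (A' ⊗[A] B) (A' ⊗[A] B)) := by
      intro n x
      rw [Ideal.smul_top_eq_map, Submodule.restrictScalars_mem, ← Ideal.map_pow,
        smul_eq_mul, Ideal.mul_top]
    have hT_T : IsAdicComplete (m.map (algebraMap A (A' ⊗[A] B))) (A' ⊗[A] B) :=
      myAdic_congr hmap hT_A
    have htower : algebraMap A (A' ⊗[A] B) =
        (algebraMap A' (A' ⊗[A] B)).comp (algebraMap A A') :=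
      IsScalarTower.algebraMap_eq A A' (A' ⊗[A] B)
    have hIJ : m.map (algebraMap A (A' ⊗[A] B)) ≤ m'.map (algebraMap A' (A' ⊗[A] B)) := by
      rw [htower, ← Ideal.map_map]
      exact Ideal.map_mono h1
    have hJI : (m'.map (algebraMap A' (A' ⊗[A] B))) ^ e ≤
        m.map (algebraMap A (A' ⊗[A] B)) := by
      rw [htower, ← Ideal.map_map, ← Ideal.map_pow]
      exact Ideal.map_mono h2
    exact myAdic_pow_le hIJ he hJI hT_T
  · -- the isomorphism
    exact myQuotIso A A' (IsLocalRing.maximalIdeal A) (IsLocalRing.maximalIdeal A') h1 B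
end

section
/- Let p be a prime, k a reduced commutative ring of characteristic p, and R a commutative k-algebra that is flat as a k-module and relatively perfect over k. Then R is reduced. -/
universe u v

/-- A commutative `k`-algebra `R` (with `k` of characteristic `p`) is *relatively perfect*
over `k` if the commutative square whose vertical arrows are the structure map `k → R`
and whose horizontal arrows are the Frobenius ring endomorphisms `a ↦ a ^ p` of `k` and
of `R` is a pushout (cocartesian) square of commutative rings.  We encode the pushout
property by its universal property: for every commutative ring `T` and ring homomorphisms
`u : k → T`, `v : R → T` with `v ∘ (k → R) = u ∘ Frob_k`, there is a unique ring
homomorphism `w : R → T` with `w ∘ Frob_R = v` and `w ∘ (k → R) = u`. -/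
def IsRelativelyPerfect (p : ℕ) (k : Type u) (R : Type v) [CommRing k] [CommRing R]
    [Algebra k R] : Prop :=
  ∀ (T : Type max u v) [CommRing T] (u' : k →+* T) (v' : R →+* T),
    (∀ a : k, v' (algebraMap k R a) = u' (a ^ p)) →
      ∃! w : R →+* T, (∀ x : R, w (x ^ p) = v' x) ∧ ∀ a : k, w (algebraMap k R a) = u' a

open TensorProduct

/-- Type synonym for `k`, viewed as a `k`-algebra via the Frobenius `a ↦ a ^ p`. -/
def FrobTwist (p : ℕ) (k : Type u) : Type u := k

/-- The identity of `k`, as a map into the type synonym `FrobTwist p k`. -/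
def FrobTwist.of (p : ℕ) {k : Type u} (a : k) : FrobTwist p k := a

section FrobTwist

variable (p : ℕ) (k : Type u) [CommRing k]

instance : CommRing (FrobTwist p k) := inferInstanceAs (CommRing k)

/-- The identity of `k`, as a ring hom into the type synonym `FrobTwist p k`. -/
def FrobTwist.ofHom : k →+* FrobTwist p k where
  toFun a := FrobTwist.of p a
  map_one' := rfl
  map_mul' _ _ := rfl
  map_zero' := rfl
  map_add' _ _ := rfl

noncomputable instance [Fact p.Prime] [CharP k p] : Algebra k (FrobTwist p k) :=
  ((FrobTwist.ofHom p k).comp (frobenius k p)).toAlgebra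

lemma FrobTwist.algebraMap_eq [Fact p.Prime] [CharP k p] (a : k) :
    algebraMap k (FrobTwist p k) a = FrobTwist.of p (a ^ p) := by
  show FrobTwist.of p (frobenius k p a) = FrobTwist.of p (a ^ p)
  rw [frobenius_def]

lemma FrobTwist.of_eq_zero_iff (a : k) : FrobTwist.of p a = 0 ↔ a = 0 := Iff.rfl

end FrobTwist

/-- Let `p` be a prime, `k` a reduced commutative ring of characteristic
`p`, and `R` a commutative `k`-algebra that is flat as a `k`-module and relatively perfect
over `k`. Then `R` is reduced. -/
theorem isReduced_of_relativelyPerfect_flat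
    (p : ℕ) (hp : p.Prime) (k : Type u) (R : Type v) [CommRing k] [CommRing R]
    [Algebra k R] [CharP k p] [IsReduced k] [Module.Flat k R]
    (hRP : IsRelativelyPerfect p k R) : IsReduced R := by
  haveI : Fact p.Prime := ⟨hp⟩
  -- The relative Frobenius target: `R ⊗[k] k`, with `k` acting on the right factor
  -- through the Frobenius.
  set T : Type max u v := R ⊗[k] (FrobTwist p k) with hT
  -- The map `a ↦ 1 ⊗ a`.
  let u' : k →+* T :=
    (Algebra.TensorProduct.includeRight : FrobTwist p k →ₐ[k] T).toRingHom.comp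
      (FrobTwist.ofHom p k)
  -- The map `x ↦ x ⊗ 1`.
  let v' : R →+* T := Algebra.TensorProduct.includeLeftRingHom
  have hone : (1 : FrobTwist p k) = FrobTwist.of p (1 : k) := rfl
  have hcomp : ∀ a : k, v' (algebraMap k R a) = u' (a ^ p) := by
    intro a
    show (algebraMap k R a) ⊗ₜ[k] (1 : FrobTwist p k)
        = (1 : R) ⊗ₜ[k] (FrobTwist.of p (a ^ p))
    rw [Algebra.algebraMap_eq_smul_one, smul_tmul]
    congr 1
    rw [Algebra.smul_def a (1 : FrobTwist p k), mul_one, FrobTwist.algebraMap_eq]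
  obtain ⟨w, ⟨hw1, _⟩, _⟩ := hRP T u' v' hcomp
  -- Key injectivity: `x ⊗ 1 = 0` in `T` implies `x = 0`, by flatness.
  have hinj : ∀ x : R, x ⊗ₜ[k] (1 : FrobTwist p k) = 0 → x = 0 := by
    intro x hx
    -- the `k`-linear map `k →ₗ[k] FrobTwist p k`, `a ↦ a ^ p`; injective since `k` is reduced
    let f : k →ₗ[k] FrobTwist p k := Algebra.linearMap k (FrobTwist p k)
    have hf : Function.Injective f := by
      intro a b hab
      have h1 : algebraMap k (FrobTwist p k) (a - b) = 0 := by
        rw [map_sub, sub_eq_zero]; exact hab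
      rw [FrobTwist.algebraMap_eq, FrobTwist.of_eq_zero_iff] at h1
      have h2 : IsNilpotent (a - b) := ⟨p, h1⟩
      exact sub_eq_zero.mp h2.eq_zero
    have hflat := Module.Flat.lTensor_preserves_injective_linearMap (M := R) f hf
    have h0 : (f.lTensor R) (x ⊗ₜ[k] (1 : k)) = 0 := by
      rw [LinearMap.lTensor_tmul]
      have hf1 : f (1 : k) = (1 : FrobTwist p k) := by
        show algebraMap k (FrobTwist p k) 1 = 1
        exact map_one _
      rw [hf1]; exact hx
    have h2 := hflat (by rw [h0, map_zero] : (f.lTensor R) (x ⊗ₜ[k] (1 : k)) = (f.lTensor R) 0)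
    have h3 := congrArg (TensorProduct.rid k R) h2
    simpa using h3
  -- Hence Frobenius on `R` is injective at `0`.
  have key : ∀ x : R, x ^ p = 0 → x = 0 := by
    intro x hx
    apply hinj
    have : w (x ^ p) = x ⊗ₜ[k] (1 : FrobTwist p k) := hw1 x
    rw [hx, map_zero] at this
    exact this.symm
  -- Iterate to kill all nilpotents.
  have keyIter : ∀ m : ℕ, ∀ x : R, x ^ (p ^ m) = 0 → x = 0 := by
    intro m
    induction m with
    | zero => intro x hx; simpa using hx
    | succ n ih =>
      intro x hx
      have h1 : (x ^ (p ^ n)) ^ p = 0 := by rw [← pow_mul, ← pow_succ]; exact hx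
      exact ih x (key _ h1)
  constructor
  intro x hx
  obtain ⟨n, hn⟩ := hx
  apply keyIter n
  have hle : n ≤ p ^ n := Nat.le_of_lt (Nat.lt_pow_self hp.one_lt)
  calc x ^ (p ^ n) = x ^ n * x ^ (p ^ n - n) := by rw [← pow_add, Nat.add_sub_cancel' hle]
  _ = 0 := by rw [hn, zero_mul]
end

section
/- Let Γ be a finite group, H ≤ Γ a subgroup, and M a finite abelian group equipped with an action of Γ by group automorphisms, such that the index [Γ:H] is coprime to the order of M. Let C be the abelian group of functions f : Γ → M satisfying f(h·g) = h•f(g) for all h ∈ H and g ∈ Γ, with pointwise addition, equipped with the Γ-action (γ•f)(g) = f(g·γ). Then the map u : M → C defined by u(m)(g) = g•m is an injective Γ-equivariant group homomorphism, and there exists a Γ-equivariant group homomorphism r : C → M with r ∘ u = id_M; in particular u is a split monomorphism of Γ-modules. -/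
universe u v

variable (Γ : Type u) [Group Γ] (H : Subgroup Γ)
variable (M : Type v) [AddCommGroup M] [DistribMulAction Γ M]

/-- The abelian group `C` of functions `f : Γ → M` satisfying `f (h * g) = h • f g` for
all `h ∈ H` and `g ∈ Γ`, with pointwise addition. -/
def coinducedModule : AddSubgroup (Γ → M) where
  carrier := {f | ∀ h ∈ H, ∀ g : Γ, f (h * g) = h • f g}
  zero_mem' := by
    intro h hh g
    simp
  add_mem' := by
    intro f₁ f₂ h₁ h₂ h hh g
    simp only [Pi.add_apply, h₁ h hh g, h₂ h hh g, smul_add]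
  neg_mem' := by
    intro f hf h hh g
    simp only [Pi.neg_apply, hf h hh g, smul_neg]

/-- The action of `Γ` on `C`, given by `(γ • f) g = f (g * γ)`. -/
instance : SMul Γ (coinducedModule Γ H M) :=
  ⟨fun γ F =>
    ⟨fun g => (F : Γ → M) (g * γ), by
      intro h hh g
      have := F.2 h hh (g * γ)
      simpa [mul_assoc] using this⟩⟩

/-- The map `u : M → C`, `u m g = g • m`. -/
def coinducedUnit : M →+ coinducedModule Γ H M where
  toFun m :=
    ⟨fun g => g • m, by
      intro h hh g
      simp only
      rw [mul_smul]⟩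
  map_zero' := Subtype.ext <| funext fun g => by simp
  map_add' m m' := Subtype.ext <| funext fun g => by simp [smul_add]

/-- Let `Γ` be a finite group, `H ≤ Γ` a subgroup, and `M` a finite
abelian group with a `Γ`-action by automorphisms, such that the index `[Γ:H]` is coprime
to the order of `M`.  Then the map `u : M → C`, `u m g = g • m`, is an injective
`Γ`-equivariant group homomorphism, and there is a `Γ`-equivariant group homomorphism
`r : C → M` with `r ∘ u = id`; in particular `u` is a split monomorphism of
`Γ`-modules. -/
theorem coinducedUnit_splits
    [Finite Γ] [Finite M] (hcop : Nat.Coprime H.index (Nat.card M)) :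
    Function.Injective (coinducedUnit Γ H M) ∧
    (∀ (γ : Γ) (m : M), coinducedUnit Γ H M (γ • m) = γ • coinducedUnit Γ H M m) ∧
    ∃ r : coinducedModule Γ H M →+ M,
      (∀ (γ : Γ) (F : coinducedModule Γ H M), r (γ • F) = γ • r F) ∧
      ∀ m : M, r (coinducedUnit Γ H M m) = m := by
  classical
  letI : Fintype (Quotient (QuotientGroup.rightRel H)) := Fintype.ofFinite _
  -- the term of the averaging sum, well-defined on right cosets
  have key : ∀ (F : coinducedModule Γ H M) (a b : Γ),
      (QuotientGroup.rightRel H) a b →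
      a⁻¹ • (F : Γ → M) a = b⁻¹ • (F : Γ → M) b := by
    intro F a b hab
    rw [QuotientGroup.rightRel_apply] at hab
    have hb : (F : Γ → M) ((b * a⁻¹) * a) = (b * a⁻¹) • (F : Γ → M) a := F.2 _ hab a
    simp only [inv_mul_cancel_right] at hb
    rw [hb, ← mul_smul]
    group
  set t : Quotient (QuotientGroup.rightRel H) → coinducedModule Γ H M → M :=
    fun x F => Quotient.liftOn x (fun g => g⁻¹ • (F : Γ → M) g) (key F) with ht
  have tmk : ∀ (g : Γ) (F : coinducedModule Γ H M),
      t (Quotient.mk _ g) F = g⁻¹ • (F : Γ → M) g := fun _ _ => rfl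
  -- the averaging map s
  set s : coinducedModule Γ H M →+ M :=
    { toFun := fun F => ∑ x : Quotient (QuotientGroup.rightRel H), t x F
      map_zero' := by
        refine Finset.sum_eq_zero fun x _ => ?_
        induction x using Quotient.inductionOn with
        | h g => simp [tmk]
      map_add' := by
        intro F G
        rw [← Finset.sum_add_distrib]
        refine Finset.sum_congr rfl fun x _ => ?_
        induction x using Quotient.inductionOn with
        | h g => simp [tmk, smul_add] } with hs
  -- s is equivariant
  have hsequiv : ∀ (γ : Γ) (F : coinducedModule Γ H M), s (γ • F) = γ • s F := by
    intro γ F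
    have hres : ∀ c : Γ, ∀ a b : Γ, (QuotientGroup.rightRel H) a b →
        (QuotientGroup.rightRel H) (a * c) (b * c) := by
      intro c a b hab
      rw [QuotientGroup.rightRel_apply] at hab ⊢
      rwa [mul_inv_rev, show b * c * (c⁻¹ * a⁻¹) = b * a⁻¹ by group]
    obtain ⟨e, he⟩ : ∃ e : Quotient (QuotientGroup.rightRel H) ≃ Quotient (QuotientGroup.rightRel H),
        ∀ g : Γ, e (Quotient.mk _ g) = Quotient.mk _ (g * γ) :=
      ⟨{ toFun := Quotient.map (· * γ) (hres γ)
         invFun := Quotient.map (· * γ⁻¹) (hres γ⁻¹)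
         left_inv := fun x => by
           induction x using Quotient.inductionOn with
           | h g => simp [Quotient.map_mk]
         right_inv := fun x => by
           induction x using Quotient.inductionOn with
           | h g => simp [Quotient.map_mk] }, fun g => rfl⟩
    have step : ∀ x, t x (γ • F) = γ • t (e x) F := by
      intro x
      induction x using Quotient.inductionOn with
      | h g =>
        rw [he g, tmk, tmk]
        show g⁻¹ • (F : Γ → M) (g * γ) = γ • (g * γ)⁻¹ • (F : Γ → M) (g * γ)
        rw [← mul_smul]
        group
    show ∑ x, t x (γ • F) = γ • ∑ x, t x F
    rw [Finset.smul_sum]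
    calc ∑ x, t x (γ • F) = ∑ x, γ • t (e x) F := Finset.sum_congr rfl fun x _ => step x
      _ = ∑ x, γ • t x F := Equiv.sum_comp e (fun x => γ • t x F)
  -- s ∘ u = index • id
  have hsu : ∀ m : M, s (coinducedUnit Γ H M m) = H.index • m := by
    intro m
    have : ∀ x : Quotient (QuotientGroup.rightRel H), t x (coinducedUnit Γ H M m) = m := by
      intro x
      induction x using Quotient.inductionOn with
      | h g =>
        rw [tmk]
        show g⁻¹ • g • m = m
        rw [← mul_smul, inv_mul_cancel, one_smul]
    show ∑ x, t x (coinducedUnit Γ H M m) = H.index • m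
    rw [Finset.sum_congr rfl fun x _ => this x, Finset.sum_const, Finset.card_univ]
    congr 1
    rw [Subgroup.index, ← Nat.card_eq_fintype_card]
    exact Nat.card_congr (QuotientGroup.quotientRightRelEquivQuotientLeftRel H)
  -- the retraction
  set k : ℕ := ((H.index : ZMod (Nat.card M))⁻¹).val with hk
  set r : coinducedModule Γ H M →+ M :=
    { toFun := fun F => k • s F
      map_zero' := by simp
      map_add' := fun F G => by simp [smul_add] } with hr
  refine ⟨?_, ?_, r, ?_, ?_⟩
  · -- injectivity, from the retraction
    intro m m' hmm
    have h1 : k • s (coinducedUnit Γ H M m) = k • s (coinducedUnit Γ H M m') := by rw [hmm]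
    rwa [hsu, hsu, zmod_val_inv_nsmul_nsmul hcop.symm, zmod_val_inv_nsmul_nsmul hcop.symm] at h1
  · -- equivariance of u
    intro γ m
    refine Subtype.ext (funext fun g => ?_)
    show g • γ • m = (g * γ) • m
    rw [mul_smul]
  · -- equivariance of r
    intro γ F
    show k • s (γ • F) = γ • k • s F
    rw [hsequiv]
    exact ((DistribMulAction.toAddMonoidHom M γ).map_nsmul k (s F)).symm
  · -- retraction property
    intro m
    show k • s (coinducedUnit Γ H M m) = m
    rw [hsu]
    exact zmod_val_inv_nsmul_nsmul hcop.symm m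
end

section
/- Let R be a commutative ring and I an ideal of R such that (R, I) is a Henselian pair, and let n ≥ 1 be an integer whose image in R is a unit. Then reduction modulo I induces a bijection from the set {r ∈ R : rⁿ = 1} of n-th roots of unity of R onto the set {s ∈ R/I : sⁿ = 1} of n-th roots of unity of R/I. -/
universe u

/-- Let `(R, I)` be a Henselian pair and `n ≥ 1` an integer whose image
in `R` is a unit. Then reduction modulo `I` induces a bijection from the set of `n`-th
roots of unity of `R` onto the set of `n`-th roots of unity of `R/I`. -/
theorem henselian_bijOn_nthRootsOfUnity
    (R : Type u) [CommRing R] (I : Ideal R) [HenselianRing R I]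
    (n : ℕ) (hn1 : 1 ≤ n) (hn : IsUnit (n : R)) :
    Set.BijOn (Ideal.Quotient.mk I) {r : R | r ^ n = 1} {s : R ⧸ I | s ^ n = 1} := by
  refine ⟨?_, ?_, ?_⟩
  · intro r hr
    simp only [Set.mem_setOf_eq] at hr ⊢
    rw [← map_pow, hr, map_one]
  · -- injectivity
    intro r hr s hs hrs
    simp only [Set.mem_setOf_eq] at hr hs
    have hd : s - r ∈ I := by
      rwa [← Ideal.Quotient.mk_eq_mk_iff_sub_mem, eq_comm]
    -- write s = r + d
    obtain ⟨k, hk⟩ := (Polynomial.binomExpansion (Polynomial.X ^ n - 1) r (s - r))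
    have hfr : (Polynomial.X ^ n - 1 : Polynomial R).eval r = 0 := by simp [hr]
    have hfs : (Polynomial.X ^ n - 1 : Polynomial R).eval (r + (s - r)) = 0 := by
      simp [hs]
    have hder : (Polynomial.X ^ n - 1 : Polynomial R).derivative.eval r
        = (n : R) * r ^ (n - 1) := by
      simp [Polynomial.derivative_X_pow]
    rw [hfs, hfr, hder, zero_add] at hk
    -- 0 = (s - r) * (n r^(n-1) + k (s - r))
    have hk' : (s - r) * ((n : R) * r ^ (n - 1) + k * (s - r)) = 0 := by
      linear_combination -hk
    have hru : IsUnit r := IsUnit.of_mul_eq_one (a := r) (r ^ (n - 1)) (by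
      rw [← pow_succ', Nat.sub_add_cancel hn1, hr])
    have hu : IsUnit ((n : R) * r ^ (n - 1)) := hn.mul (hru.pow _)
    have hunit : IsUnit ((n : R) * r ^ (n - 1) + k * (s - r)) := by
      obtain ⟨u, hu'⟩ := hu
      have hmem : k * (s - r) ∈ Ideal.jacobson (⊥ : Ideal R) :=
        HenselianRing.jac (I.mul_mem_left k hd)
      have := (Ideal.mem_jacobson_bot.1 hmem) (↑u⁻¹)
      have h2 : IsUnit ((k * (s - r)) * ↑u⁻¹ + 1) := this
      have : ((n : R) * r ^ (n - 1) + k * (s - r))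
          = ((k * (s - r)) * ↑u⁻¹ + 1) * u := by
        rw [add_mul, one_mul, mul_assoc, Units.inv_mul, mul_one, hu', add_comm]
      rw [this]
      exact h2.mul u.isUnit
    have : s - r = 0 := by
      obtain ⟨v, hv⟩ := hunit
      have := hk'
      rw [← hv] at this
      have := congrArg (· * (↑v⁻¹ : R)) this
      simpa [mul_assoc] using this
    have := sub_eq_zero.mp this
    exact this.symm
  · -- surjectivity
    intro s hs
    simp only [Set.mem_setOf_eq] at hs
    obtain ⟨a₀, rfl⟩ := Ideal.Quotient.mk_surjective s
    have hmonic : (Polynomial.X ^ n - 1 : Polynomial R).Monic := by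
      simpa using Polynomial.monic_X_pow_sub_C (1 : R) (Nat.one_le_iff_ne_zero.mp hn1)
    have heval : (Polynomial.X ^ n - 1 : Polynomial R).eval a₀ ∈ I := by
      rw [← Ideal.Quotient.eq_zero_iff_mem]
      simp [map_pow, hs]
    have hder : IsUnit (Ideal.Quotient.mk I
        ((Polynomial.X ^ n - 1 : Polynomial R).derivative.eval a₀)) := by
      have h1 : (Polynomial.X ^ n - 1 : Polynomial R).derivative.eval a₀
          = (n : R) * a₀ ^ (n - 1) := by simp [Polynomial.derivative_X_pow]
      rw [h1, map_mul]
      refine IsUnit.mul ?_ ?_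
      · exact hn.map (Ideal.Quotient.mk I)
      · have hsu : IsUnit (Ideal.Quotient.mk I a₀) :=
          IsUnit.of_mul_eq_one ((Ideal.Quotient.mk I a₀) ^ (n - 1)) (by
            rw [← pow_succ', Nat.sub_add_cancel hn1, hs])
        rw [map_pow]
        exact hsu.pow _
    obtain ⟨a, ha, haI⟩ := HenselianRing.is_henselian (Polynomial.X ^ n - 1) hmonic a₀ heval hder
    refine ⟨a, ?_, ?_⟩
    · simp only [Set.mem_setOf_eq]
      have := ha
      simp only [Polynomial.IsRoot, Polynomial.eval_sub, Polynomial.eval_pow,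
        Polynomial.eval_X, Polynomial.eval_one, sub_eq_zero] at this
      exact this
    · rwa [Ideal.Quotient.mk_eq_mk_iff_sub_mem]
end
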